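/- arXiv:1402.3341 — 8 statements merged into one kernel-verified Lean document; each statement's English description precedes it below -/
import Mathlib

section
/- Let q be a prime power and m ≥ 1. Two distinct lines [l] = [l_1, …, l_{m+1}] and [l'] = [l'_1, …, l'_{m+1}] of the Wenger graph W_m(q) have a common neighbor in P if and only if there exist t ∈ F_q \ {0} and u ∈ F_q such that l_i − l'_i = t·u^{i−1} for all i = 1, …, m+1; moreover, in that case they have exactly one common neighbor. -/
open Finset

/-- Adjacency relation of the Wenger graph `W_m(q)`: a point `p = (p_1, …, p_{m+1})`
(0-indexed here) is adjacent to a line `l = (l_1, …, l_{m+1})` iff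
`l_{i+1} + p_{i+1} = l_i * p_1` for `i = 1, …, m`. -/
def wengerAdj {F : Type*} [Field F] {m : ℕ} (p l : Fin (m + 1) → F) : Prop :=
  ∀ i : Fin m, l i.succ + p i.succ = l i.castSucc * p 0

/-- The Wenger graph `W_m(q)` as a simple graph on `P ⊕ L`, where both `P` (points, `inl`)
and `L` (lines, `inr`) are copies of `F^{m+1}` for a finite field `F` with `q` elements. -/
def WengerGraph (F : Type*) [Field F] (m : ℕ) :
    SimpleGraph ((Fin (m + 1) → F) ⊕ (Fin (m + 1) → F)) where
  Adj x y :=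
    match x, y with
    | Sum.inl p, Sum.inr l => wengerAdj p l
    | Sum.inr l, Sum.inl p => wengerAdj p l
    | _, _ => False
  symm := ⟨by rintro (p | l) (p' | l') h <;> exact h⟩
  loopless := ⟨by rintro (p | l) h <;> exact h⟩

/-- Two distinct lines `l, l'` of `W_m(q)` have a common neighbor in `P`
iff there are `t ≠ 0` and `u` in `F_q` with `l_i - l'_i = t * u^(i-1)` for all
`i = 1, …, m+1`; moreover, in that case the common neighbor is unique. -/
theorem wenger_common_neighbor (q m : ℕ) (hm : 1 ≤ m) (F : Type) [Field F] [Fintype F]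
    (hq : Fintype.card F = q) (l l' : Fin (m + 1) → F) (hll' : l ≠ l') :
    ((∃ p : Fin (m + 1) → F, wengerAdj p l ∧ wengerAdj p l') ↔
      ∃ t u : F, t ≠ 0 ∧ ∀ i : Fin (m + 1), l i - l' i = t * u ^ (i : ℕ)) ∧
    ((∃ p : Fin (m + 1) → F, wengerAdj p l ∧ wengerAdj p l') →
      ∃! p : Fin (m + 1) → F, wengerAdj p l ∧ wengerAdj p l') := by
  classical
  -- key: differences form a geometric sequence
  have key : ∀ p : Fin (m + 1) → F, wengerAdj p l → wengerAdj p l' →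
      ∀ n (h : n < m + 1), l ⟨n, h⟩ - l' ⟨n, h⟩ = (l 0 - l' 0) * (p 0) ^ n := by
    intro p h1 h2 n
    induction n with
    | zero => intro h; simp
    | succ n ih =>
      intro h
      have hn : n < m := Nat.lt_of_succ_lt_succ h
      have e1 := h1 ⟨n, hn⟩
      have e2 := h2 ⟨n, hn⟩
      have ihn := ih (Nat.lt_of_succ_lt h)
      have hsucc : (⟨n, hn⟩ : Fin m).succ = ⟨n + 1, h⟩ := rfl
      have hcast : (⟨n, hn⟩ : Fin m).castSucc = ⟨n, Nat.lt_of_succ_lt h⟩ := rfl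
      rw [hsucc, hcast] at e1 e2
      have : l ⟨n + 1, h⟩ - l' ⟨n + 1, h⟩ =
          (l ⟨n, Nat.lt_of_succ_lt h⟩ - l' ⟨n, Nat.lt_of_succ_lt h⟩) * p 0 := by
        linear_combination e1 - e2
      rw [this, ihn]; ring
  have d0 : ∀ p : Fin (m + 1) → F, wengerAdj p l → wengerAdj p l' → l 0 - l' 0 ≠ 0 := by
    intro p h1 h2 h0
    apply hll'
    funext i
    have := key p h1 h2 i i.isLt
    rw [h0, zero_mul] at this
    have h' : l i - l' i = 0 := this
    exact sub_eq_zero.mp h'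
  constructor
  · constructor
    · rintro ⟨p, h1, h2⟩
      exact ⟨l 0 - l' 0, p 0, d0 p h1 h2, fun i => key p h1 h2 i i.isLt⟩
    · rintro ⟨t, u, ht, hf⟩
      refine ⟨Fin.cases u (fun i => l i.castSucc * u - l i.succ), ?_, ?_⟩
      · intro i
        simp only [Fin.cases_succ, Fin.cases_zero]
        ring
      · intro i
        simp only [Fin.cases_succ, Fin.cases_zero]
        have hs := hf i.succ
        have hc := hf i.castSucc
        rw [Fin.val_succ] at hs
        rw [Fin.coe_castSucc] at hc
        linear_combination u * hc - hs
  · rintro ⟨p, h1, h2⟩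
    refine ⟨p, ⟨h1, h2⟩, ?_⟩
    rintro p' ⟨h1', h2'⟩
    have hd := d0 p h1 h2
    have h1lt : 1 < m + 1 := Nat.succ_lt_succ hm
    have e := key p h1 h2 1 h1lt
    have e' := key p' h1' h2' 1 h1lt
    have hp0 : p' 0 = p 0 := by
      have := e'.symm.trans e
      rw [pow_one, pow_one] at this
      exact mul_left_cancel₀ hd this
    funext j
    induction j using Fin.cases with
    | zero => exact hp0
    | succ i =>
      have a := h1 i
      have a' := h1' i
      have : p' i.succ = l i.castSucc * p' 0 - l i.succ := by linear_combination a'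
      rw [this, hp0]
      linear_combination -a
end

section
/- Let q be a prime power and 1 ≤ m ≤ q − 1. Then the Wenger graph W_m(q) is connected. -/
open Finset

namespace WengerAux

variable {F : Type*} [Field F] {m : ℕ}

/-- ℕ-extension of a `Fin (m+1)`-indexed vector. -/
def ext (p : Fin (m + 1) → F) : ℕ → F := fun n => if h : n < m + 1 then p ⟨n, h⟩ else 0

/-- Coordinates of the unique line through point `p` with first coordinate `a`. -/
def lineSeq (p : Fin (m + 1) → F) (a : F) : ℕ → F
  | 0 => a
  | n + 1 => lineSeq p a n * p 0 - ext p (n + 1)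

/-- The line through `p` with first coordinate `a`. -/
def lineFrom (p : Fin (m + 1) → F) (a : F) : Fin (m + 1) → F := fun i => lineSeq p a i

lemma ext_eq (p : Fin (m + 1) → F) (i : Fin (m + 1)) : ext p (i : ℕ) = p i := by
  simp [ext, i.isLt]

lemma adj_lineFrom (p : Fin (m + 1) → F) (a : F) : wengerAdj p (lineFrom p a) := by
  intro i
  have h1 : lineFrom p a i.succ = lineSeq p a ((i : ℕ) + 1) := rfl
  have h2 : lineFrom p a i.castSucc = lineSeq p a (i : ℕ) := rfl
  rw [h1, h2, lineSeq]
  have h3 : ext p ((i : ℕ) + 1) = p i.succ := ext_eq p i.succ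
  rw [h3]; ring

/-- The point on line `l` with first coordinate `b`. -/
def pointFrom (l : Fin (m + 1) → F) (b : F) : Fin (m + 1) → F :=
  Fin.cons b (fun i => l i.castSucc * b - l i.succ)

lemma adj_pointFrom (l : Fin (m + 1) → F) (b : F) : wengerAdj (pointFrom l b) l := by
  intro i
  show l i.succ + (pointFrom l b) i.succ = l i.castSucc * (pointFrom l b) 0
  simp [pointFrom, Fin.cons_succ, Fin.cons_zero]

lemma adj_PL (p l : Fin (m + 1) → F) (h : wengerAdj p l) :
    (WengerGraph F m).Adj (Sum.inl p) (Sum.inr l) := h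

/-- Two-step reachability from a point `p` to a point with first coordinate 0. -/
lemma reach_next (p : Fin (m + 1) → F) (a : F) :
    (WengerGraph F m).Reachable (Sum.inl p) (Sum.inl (pointFrom (lineFrom p a) 0)) :=
  ((adj_PL p _ (adj_lineFrom p a)).reachable).trans
    ((adj_PL _ _ (adj_pointFrom (lineFrom p a) 0)).symm.reachable)

lemma pointFrom_zero_succ (l : Fin (m + 1) → F) (i : Fin m) :
    pointFrom l 0 i.succ = -(l i.succ) := by
  simp [pointFrom, Fin.cons_succ]

/-- ℕ-extension of a `Fin m`-indexed vector. -/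
def extm (v : Fin m → F) : ℕ → F := fun n => if h : n < m then v ⟨n, h⟩ else 0

/-- The forced line sequence: `Lseq v 0 = 0`, `Lseq v (n+1) = -v n`. -/
def Lseq (v : Fin m → F) : ℕ → F
  | 0 => 0
  | n + 1 => -extm v n

/-- The midpoint used in the four-step move. -/
def midP (v : Fin m → F) (b : F) : Fin (m + 1) → F :=
  Fin.cons b (fun i => Lseq v (i : ℕ) * b + v i)

lemma lineSeq_midP (v : Fin m → F) (b a : F) :
    ∀ n, n ≤ m → lineSeq (midP v b) a n = Lseq v n + a * b ^ n := by
  intro n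
  induction n with
  | zero => intro _; simp [lineSeq, Lseq]
  | succ n ih =>
    intro hn
    have hnm : n < m := hn
    have hP0 : midP v b 0 = b := rfl
    have hext : ext (midP v b) (n + 1) = Lseq v n * b + v ⟨n, hnm⟩ := by
      have h1 : (⟨n + 1, Nat.succ_lt_succ hnm⟩ : Fin (m + 1)) = (⟨n, hnm⟩ : Fin m).succ := rfl
      simp only [ext, dif_pos (Nat.succ_lt_succ hnm), h1, midP, Fin.cons_succ]
    rw [lineSeq, hext, hP0, ih (Nat.le_of_lt hnm)]
    have hL : Lseq v (n + 1) = -v ⟨n, hnm⟩ := by simp [Lseq, extm, hnm]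
    rw [hL]; ring

lemma endpoint_midP (v : Fin m → F) (b a : F) :
    pointFrom (lineFrom (midP v b) a) 0 =
      Fin.cons 0 (fun i => v i - a * b ^ ((i : ℕ) + 1)) := by
  funext j
  refine Fin.cases ?_ ?_ j
  · rfl
  · intro i
    rw [pointFrom_zero_succ, Fin.cons_succ]
    have h1 : lineFrom (midP v b) a i.succ = lineSeq (midP v b) a ((i : ℕ) + 1) := rfl
    rw [h1, lineSeq_midP v b a _ (Nat.succ_le_of_lt i.isLt)]
    have hL : Lseq v ((i : ℕ) + 1) = -v i := by
      simp [Lseq, extm, i.isLt]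
    rw [hL, Nat.succ_eq_add_one, pow_succ]; ring

/-- The four-step move: from `(0, v)` we can reach `(0, v + c·(1, b, b², …))` when `b ≠ 0`. -/
lemma reach_add (v : Fin m → F) (b c : F) (hb : b ≠ 0) :
    (WengerGraph F m).Reachable (Sum.inl (Fin.cons 0 v))
      (Sum.inl (Fin.cons 0 (fun i => v i + c * b ^ (i : ℕ)))) := by
  have h0 : pointFrom (lineFrom (midP v b) 0) 0 = Fin.cons 0 v := by
    rw [endpoint_midP]
    have ht : (fun i : Fin m => v i - 0 * b ^ ((i : ℕ) + 1)) = v := by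
      funext i; ring
    rw [ht]
  have h1 : pointFrom (lineFrom (midP v b) (-(c / b))) 0 =
      Fin.cons 0 (fun i => v i + c * b ^ (i : ℕ)) := by
    rw [endpoint_midP]
    have ht : (fun i : Fin m => v i - -(c / b) * b ^ ((i : ℕ) + 1)) =
        fun i : Fin m => v i + c * b ^ (i : ℕ) := by
      funext i
      have hx : -(c / b) * b ^ ((i : ℕ) + 1) = -(c * b ^ (i : ℕ)) := by
        rw [pow_succ]; field_simp
      rw [hx]; ring
    rw [ht]
  have r0 := reach_next (midP v b) 0
  have r1 := reach_next (midP v b) (-(c / b))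
  rw [h0] at r0; rw [h1] at r1
  exact r0.symm.trans r1

lemma cons_zero_zero : (Fin.cons 0 (0 : Fin m → F) : Fin (m + 1) → F) = 0 := by
  funext j
  refine Fin.cases ?_ ?_ j <;> simp

/-- Reaching all sums of scaled geometric vectors. -/
lemma reach_sum (e : Fin m → F) (he : ∀ j, e j ≠ 0) (c : Fin m → F) (s : Finset (Fin m)) :
    (WengerGraph F m).Reachable (Sum.inl 0)
      (Sum.inl (Fin.cons 0 (fun i => ∑ j ∈ s, c j * e j ^ (i : ℕ)))) := by
  classical
  induction s using Finset.induction with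
  | empty =>
    have h : (Fin.cons 0 (fun i : Fin m => ∑ j ∈ (∅ : Finset (Fin m)), c j * e j ^ (i : ℕ)) :
        Fin (m + 1) → F) = 0 := by
      funext j; refine Fin.cases ?_ ?_ j <;> simp
    rw [h]
  | @insert j s' hj ih =>
    have key := reach_add (m := m) (fun i : Fin m => ∑ k ∈ s', c k * e k ^ (i : ℕ)) (e j) (c j) (he j)
    have heq : (fun i : Fin m => (∑ k ∈ s', c k * e k ^ (i : ℕ)) + c j * e j ^ (i : ℕ)) =
        (fun i : Fin m => ∑ k ∈ insert j s', c k * e k ^ (i : ℕ)) := by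
      funext i; rw [Finset.sum_insert hj]; ring
    rw [heq] at key
    exact ih.trans key

end WengerAux

/-- For a prime power `q` and `1 ≤ m ≤ q − 1`, the Wenger graph
`W_m(q)` is connected. -/
theorem wenger_connected (q m : ℕ) (F : Type) [Field F] [Fintype F]
    (hq : Fintype.card F = q) (hm1 : 1 ≤ m) (hm2 : m ≤ q - 1) :
    (WengerGraph F m).Connected := by
  classical
  open WengerAux Matrix in
  -- an injective family of `m` nonzero elements of `F`
  have hcard : Fintype.card (Fin m) ≤ Fintype.card Fˣ := by
    rw [Fintype.card_fin, Fintype.card_units, hq]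
    exact hm2
  obtain ⟨e0⟩ := Function.Embedding.nonempty_of_card_le hcard
  set e : Fin m → F := fun j => (e0 j : F) with he_def
  have he : ∀ j, e j ≠ 0 := fun j => (e0 j).ne_zero
  have heinj : Function.Injective e := fun a b hab => e0.injective (Units.ext hab)
  -- every point with first coordinate 0 is reachable from the origin
  have reach0 : ∀ v : Fin m → F,
      (WengerGraph F m).Reachable (Sum.inl 0) (Sum.inl (Fin.cons 0 v)) := by
    intro v
    have hdet : (Matrix.vandermonde e).det ≠ 0 :=
      Matrix.det_vandermonde_ne_zero_iff.mpr heinj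
    have hunit : IsUnit (Matrix.vandermonde e).transpose := by
      rw [Matrix.isUnit_iff_isUnit_det, Matrix.det_transpose]
      exact hdet.isUnit
    obtain ⟨c, hc⟩ := (Matrix.mulVec_surjective_iff_isUnit.mpr hunit) v
    have hv : v = fun i : Fin m => ∑ j ∈ Finset.univ, c j * e j ^ (i : ℕ) := by
      funext i
      rw [← hc]
      simp [Matrix.mulVec, Matrix.vandermonde, dotProduct, Matrix.transpose_apply, mul_comm]
    rw [hv]
    exact reach_sum e he c Finset.univ
  have key : ∀ x, (WengerGraph F m).Reachable (Sum.inl 0) x := by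
    rintro (p | l)
    · have r1 := reach_next p 0
      set p' := pointFrom (lineFrom p 0) 0 with hp'
      have hp'0 : p' = Fin.cons 0 (Fin.tail p') := by
        have h0 : p' 0 = 0 := rfl
        rw [← h0]
        exact (Fin.cons_self_tail p').symm
      have r2 : (WengerGraph F m).Reachable (Sum.inl 0) (Sum.inl p') := by
        rw [hp'0]; exact reach0 (Fin.tail p')
      exact r2.trans r1.symm
    · have hadj := adj_PL _ _ (adj_pointFrom l 0)
      have r2 : (WengerGraph F m).Reachable (Sum.inl 0) (Sum.inl (pointFrom l 0)) := by
        have : pointFrom l 0 = Fin.cons 0 (fun i => l i.castSucc * 0 - l i.succ) := rfl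
        rw [this]; exact reach0 _
      exact r2.trans hadj.reachable
  rw [SimpleGraph.connected_iff]
  exact ⟨fun u v => (key u).symm.trans (key v), ⟨Sum.inl 0⟩⟩
end

section
/- Let q be a prime power and 1 ≤ m ≤ q − 1. Then the diameter of the Wenger graph W_m(q) is at most 2m + 2; that is, any two vertices of W_m(q) are joined by a path of length at most 2m + 2. -/
open Finset

namespace Wenger

open Matrix

variable {F : Type*} [Field F]

/-- The invariant coordinates `φ_k(p) = ∑_{j=1}^{k} p_{j+1} p_1^{k-j}` of a point. -/
def phi (m : ℕ) (p : Fin (m + 1) → F) : ℕ → F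
  | 0 => 0
  | k + 1 => phi m p k * p 0 + (if h : k + 1 < m + 1 then p ⟨k + 1, h⟩ else 0)

theorem phi_adj {m : ℕ} (p l : Fin (m + 1) → F) (h : wengerAdj p l) :
    ∀ k (hk : k ≤ m), phi m p k = l 0 * (p 0) ^ k - l ⟨k, by omega⟩ := by
  intro k
  induction k with
  | zero => intro _; simp [phi, show (⟨0, by omega⟩ : Fin (m+1)) = 0 from rfl]
  | succ k ih =>
    intro hk
    have ihk := ih (by omega)
    have hadj := h ⟨k, by omega⟩
    have h1 : (⟨k, by omega⟩ : Fin m).succ = (⟨k + 1, by omega⟩ : Fin (m + 1)) := rfl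
    have h2 : (⟨k, by omega⟩ : Fin m).castSucc = (⟨k, by omega⟩ : Fin (m + 1)) := rfl
    rw [h1, h2] at hadj
    simp only [phi, dif_pos (show k + 1 < m + 1 by omega)]
    rw [ihk]
    have : p (⟨k + 1, by omega⟩ : Fin (m + 1)) = l ⟨k, by omega⟩ * p 0 - l ⟨k + 1, by omega⟩ := by
      linear_combination hadj
    rw [this]
    ring

/-- The unique line through the point `p` whose first coordinate is `a`. -/
def lineThroughAux (m : ℕ) (p : Fin (m + 1) → F) (a : F) : ℕ → F
  | 0 => a
  | n + 1 => lineThroughAux m p a n * p 0 - (if h : n + 1 < m + 1 then p ⟨n + 1, h⟩ else 0)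

def lineThrough (m : ℕ) (p : Fin (m + 1) → F) (a : F) : Fin (m + 1) → F :=
  fun i => lineThroughAux m p a i

@[simp] theorem lineThrough_zero (m : ℕ) (p : Fin (m + 1) → F) (a : F) :
    lineThrough m p a 0 = a := rfl

theorem lineThrough_adj (m : ℕ) (p : Fin (m + 1) → F) (a : F) :
    wengerAdj p (lineThrough m p a) := by
  intro i
  show lineThroughAux m p a (i.succ : ℕ) + p i.succ = lineThroughAux m p a (i.castSucc : ℕ) * p 0
  have hv : (i.succ : ℕ) = (i : ℕ) + 1 := rfl
  have hc : (i.castSucc : ℕ) = (i : ℕ) := rfl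
  rw [hv, hc]
  have hlt : (i : ℕ) + 1 < m + 1 := by omega
  simp only [lineThroughAux, dif_pos hlt]
  have : p (⟨(i : ℕ) + 1, hlt⟩ : Fin (m + 1)) = p i.succ := rfl
  rw [this]; ring

/-- The unique point on the line `l` whose first coordinate is `b`. -/
def pointOn (m : ℕ) (l : Fin (m + 1) → F) (b : F) : Fin (m + 1) → F :=
  Fin.cases b (fun i => l i.castSucc * b - l i.succ)

@[simp] theorem pointOn_zero (m : ℕ) (l : Fin (m + 1) → F) (b : F) :
    pointOn m l b 0 = b := rfl

theorem pointOn_adj (m : ℕ) (l : Fin (m + 1) → F) (b : F) :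
    wengerAdj (pointOn m l b) l := by
  intro i
  show l i.succ + (Fin.cases b (fun i => l i.castSucc * b - l i.succ) i.succ : F)
      = l i.castSucc * (pointOn m l b 0)
  rw [Fin.cases_succ, pointOn_zero]
  ring

/-- Abel summation for the telescoping coefficients used below. -/
theorem abel_sum (c v : ℕ → F) :
    ∀ n : ℕ, ∑ j ∈ range n, (∑ t ∈ Ico (j + 1) (n + 1), c t) * (v (j + 1) - v j)
      = ∑ t ∈ range (n + 1), c t * (v t - v 0)
  | 0 => by simp
  | n + 1 => by
    have key : ∀ j ∈ range (n + 1),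
        (∑ t ∈ Ico (j + 1) (n + 1 + 1), c t) * (v (j + 1) - v j)
          = (∑ t ∈ Ico (j + 1) (n + 1), c t) * (v (j + 1) - v j)
            + c (n + 1) * (v (j + 1) - v j) := by
      intro j hj
      rw [Finset.sum_Ico_succ_top (by simp only [Finset.mem_range] at hj; omega)]
      ring
    rw [Finset.sum_congr rfl key, Finset.sum_add_distrib,
      Finset.sum_range_succ (fun j => (∑ t ∈ Ico (j + 1) (n + 1), c t) * (v (j + 1) - v j))]
    rw [Finset.Ico_self, Finset.sum_empty, zero_mul, add_zero, abel_sum c v n,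
      ← Finset.mul_sum, Finset.sum_range_sub v, Finset.sum_range_succ
      (fun t => c t * (v t - v 0)) (n + 1)]

/-- Solving a Vandermonde linear system with distinct nodes. -/
theorem vandermonde_solve {n : ℕ} (x : Fin n → F) (hx : Function.Injective x)
    (d : Fin n → F) :
    ∃ c : Fin n → F, ∀ i : Fin n, ∑ t, c t * x t ^ (i : ℕ) = d i := by
  classical
  set M : Matrix (Fin n) (Fin n) F := (Matrix.vandermonde x)ᵀ with hM
  have hdet : IsUnit M.det := by
    rw [hM, Matrix.det_transpose]
    exact isUnit_iff_ne_zero.mpr (Matrix.det_vandermonde_ne_zero_iff.mpr hx)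
  refine ⟨M⁻¹.mulVec d, fun i => ?_⟩
  have h2 : M.mulVec (M⁻¹.mulVec d) = d := by
    rw [Matrix.mulVec_mulVec, Matrix.mul_nonsing_inv M hdet, Matrix.one_mulVec]
  have h3 := congrFun h2 i
  simpa [hM, Matrix.mulVec, Matrix.vandermonde, dotProduct, mul_comm] using h3

/-- A chain of `n` "double steps" starting at `p`, passing through points with first
coordinates `x 0, x 1, …, x n` and using lines with first coordinates `a 0, …, a (n-1)`. -/
theorem chain (m : ℕ) (x a : ℕ → F) (p : Fin (m + 1) → F) (hp : p 0 = x 0) :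
    ∀ n : ℕ, ∃ p' : Fin (m + 1) → F, p' 0 = x n ∧
      (∀ k ≤ m, phi m p' k = phi m p k
        + ∑ j ∈ range n, a j * (x (j + 1) ^ k - x j ^ k)) ∧
      ∃ w : (WengerGraph F m).Walk (Sum.inl p) (Sum.inl p'), w.length = 2 * n
  | 0 => ⟨p, hp, by simp, ⟨SimpleGraph.Walk.nil, rfl⟩⟩
  | n + 1 => by
    obtain ⟨p₁, h0, hphi, w, hw⟩ := chain m x a p hp n
    set L := lineThrough m p₁ (a n) with hLdef
    set p' := pointOn m L (x (n + 1)) with hp'def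
    have hA : wengerAdj p₁ L := lineThrough_adj m p₁ (a n)
    have hB : wengerAdj p' L := pointOn_adj m L (x (n + 1))
    have e1 : (WengerGraph F m).Adj (Sum.inl p₁) (Sum.inr L) := hA
    have e2 : (WengerGraph F m).Adj (Sum.inr L) (Sum.inl p') := hB
    have hx1 : p' 0 = x (n + 1) := pointOn_zero m L (x (n + 1))
    have hL0 : L 0 = a n := lineThrough_zero m p₁ (a n)
    refine ⟨p', hx1, ?_, ⟨(w.concat e1).concat e2, ?_⟩⟩
    · intro k hk
      have hA' := phi_adj p₁ L hA k hk
      have hB' := phi_adj p' L hB k hk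
      rw [Finset.sum_range_succ, ← add_assoc, ← hphi k hk]
      rw [hx1, hL0] at hB'
      rw [h0, hL0] at hA'
      linear_combination hB' - hA'
    · simp only [SimpleGraph.Walk.length_concat, hw]
      omega

/-- A point is determined by its first coordinate and its `φ`-invariants. -/
theorem eq_of_phi (m : ℕ) (p p' : Fin (m + 1) → F) (h0 : p 0 = p' 0)
    (h : ∀ k, k ≤ m → phi m p k = phi m p' k) : p = p' := by
  funext i
  rcases i with ⟨k, hk⟩
  match k, hk with
  | 0, hk => exact h0
  | k + 1, hk =>
    have h1 := h (k + 1) (by omega)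
    have h2 := h k (by omega)
    simp only [phi, dif_pos (show k + 1 < m + 1 by omega)] at h1
    rw [h2, h0] at h1
    exact add_left_cancel h1

theorem pointToPoint [Fintype F] (m : ℕ) (hm1 : 1 ≤ m) (hcard : m + 1 ≤ Fintype.card F)
    (p p' : Fin (m + 1) → F) (hne : p 0 ≠ p' 0) :
    ∃ w : (WengerGraph F m).Walk (Sum.inl p) (Sum.inl p'), w.length = 2 * m := by
  classical
  obtain ⟨f⟩ : Nonempty (Fin (m + 1) ↪ F) :=
    Function.Embedding.nonempty_of_card_le (by simpa using hcard)
  set g1 : Fin (m + 1) → F := fun i => Equiv.swap (f 0) (p 0) (f i) with hg1def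
  have hg1 : Function.Injective g1 := (Equiv.injective _).comp f.injective
  have hg10 : g1 0 = p 0 := Equiv.swap_apply_left _ _
  set g2 : Fin (m + 1) → F := fun i => Equiv.swap (g1 (Fin.last m)) (p' 0) (g1 i) with hg2def
  have hg2 : Function.Injective g2 := (Equiv.injective _).comp hg1
  have hg2last : g2 (Fin.last m) = p' 0 := Equiv.swap_apply_left _ _
  have hlast0 : (0 : Fin (m + 1)) ≠ Fin.last m := by
    intro hh
    have h' : (0 : ℕ) = m := congrArg Fin.val hh
    omega
  have hg1ne : g1 0 ≠ g1 (Fin.last m) := fun hh => hlast0 (hg1 hh)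
  have hg20 : g2 0 = p 0 := by
    show Equiv.swap (g1 (Fin.last m)) (p' 0) (g1 0) = p 0
    rw [Equiv.swap_apply_of_ne_of_ne hg1ne (show g1 0 ≠ p' 0 by rw [hg10]; exact hne)]
    exact hg10
  set xN : ℕ → F := fun j => if h : j < m + 1 then g2 ⟨j, h⟩ else 0 with hxNdef
  obtain ⟨c, hc⟩ := vandermonde_solve g2 hg2
    (fun i => phi m p' (i : ℕ) - phi m p (i : ℕ))
  set cN : ℕ → F := fun t => if h : t < m + 1 then c ⟨t, h⟩ else 0 with hcNdef
  have hp0 : p 0 = xN 0 := by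
    rw [hxNdef]
    simp only [dif_pos (show 0 < m + 1 by omega)]
    rw [show (⟨0, by omega⟩ : Fin (m + 1)) = 0 from rfl, hg20]
  obtain ⟨p'', hx, hphi, w, hw⟩ :=
    chain m xN (fun j => ∑ t ∈ Ico (j + 1) (m + 1), cN t) p hp0 m
  have hc0 : ∑ t : Fin (m + 1), c t = 0 := by
    have h0 := hc 0
    simp only [Fin.val_zero, pow_zero, mul_one] at h0
    rw [h0]
    show phi m p' 0 - phi m p 0 = 0
    simp [phi]
  have hphieq : ∀ k, k ≤ m → phi m p'' k = phi m p' k := by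
    intro k hk
    have habel : ∑ j ∈ range m, (∑ t ∈ Ico (j + 1) (m + 1), cN t) * (xN (j + 1) ^ k - xN j ^ k)
        = ∑ t ∈ range (m + 1), cN t * (xN t ^ k - xN 0 ^ k) :=
      abel_sum cN (fun j => xN j ^ k) m
    have hfin : ∑ t ∈ range (m + 1), cN t * (xN t ^ k - xN 0 ^ k)
        = ∑ t : Fin (m + 1), c t * (g2 t ^ k - p 0 ^ k) := by
      rw [← Fin.sum_univ_eq_sum_range (fun t => cN t * (xN t ^ k - xN 0 ^ k)) (m + 1)]
      refine Finset.sum_congr rfl fun t _ => ?_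
      rw [hcNdef, hxNdef]
      simp only [dif_pos t.isLt, Fin.eta]
      rw [show (if h : 0 < m + 1 then g2 ⟨0, h⟩ else 0) = p 0 by
        rw [dif_pos (show 0 < m + 1 by omega),
          show (⟨0, by omega⟩ : Fin (m + 1)) = 0 from rfl, hg20]]
    have hsplit : ∑ t : Fin (m + 1), c t * (g2 t ^ k - p 0 ^ k)
        = (∑ t : Fin (m + 1), c t * g2 t ^ k) - (∑ t : Fin (m + 1), c t) * p 0 ^ k := by
      rw [Finset.sum_mul, ← Finset.sum_sub_distrib]
      exact Finset.sum_congr rfl fun t _ => by ring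
    have hck : ∑ t : Fin (m + 1), c t * g2 t ^ k = phi m p' k - phi m p k := by
      have h1 := hc ⟨k, by omega⟩
      simpa using h1
    have h2 := hphi k hk
    rw [habel, hfin, hsplit, hck, hc0] at h2
    rw [h2]
    ring
  have hx' : p'' 0 = p' 0 := by
    rw [hx, hxNdef]
    simp only [dif_pos (show m < m + 1 by omega)]
    rw [show (⟨m, by omega⟩ : Fin (m + 1)) = Fin.last m from rfl, hg2last]
  have heq : p'' = p' := eq_of_phi m p'' p' hx' hphieq
  subst heq
  exact ⟨w, hw⟩

theorem pointToLine [Fintype F] (m : ℕ) (hm1 : 1 ≤ m) (hcard : m + 1 ≤ Fintype.card F)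
    (p l : Fin (m + 1) → F) :
    ∃ w : (WengerGraph F m).Walk (Sum.inl p) (Sum.inr l), w.length = 2 * m + 1 := by
  have hnt : Nontrivial F := Fintype.one_lt_card_iff_nontrivial.mp (by omega)
  obtain ⟨b, hb⟩ := exists_ne (p 0)
  have hne : p 0 ≠ pointOn m l b 0 := by
    rw [pointOn_zero]
    exact fun hh => hb hh.symm
  obtain ⟨w, hw⟩ := pointToPoint m hm1 hcard p (pointOn m l b) hne
  have e : (WengerGraph F m).Adj (Sum.inl (pointOn m l b)) (Sum.inr l) := pointOn_adj m l b
  exact ⟨w.concat e, by rw [SimpleGraph.Walk.length_concat, hw]⟩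

end Wenger

/-- For a prime power `q` and `1 ≤ m ≤ q − 1`, any two vertices of the
Wenger graph `W_m(q)` are joined by a walk of length at most `2m + 2`, i.e. the diameter
of `W_m(q)` is at most `2m + 2`. -/
theorem wenger_diameter_le (q m : ℕ) (F : Type) [Field F] [Fintype F]
    (hq : Fintype.card F = q) (hm1 : 1 ≤ m) (hm2 : m ≤ q - 1)
    (u v : (Fin (m + 1) → F) ⊕ (Fin (m + 1) → F)) :
    ∃ w : (WengerGraph F m).Walk u v, w.length ≤ 2 * m + 2 := by
  have hq1 : 1 ≤ q := hq ▸ Fintype.card_pos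
  have hcard : m + 1 ≤ Fintype.card F := by rw [hq]; omega
  obtain (p | l) := u <;> obtain (p' | l') := v
  · obtain ⟨w, hw⟩ := Wenger.pointToLine m hm1 hcard p (Wenger.lineThrough m p' 0)
    have e : (WengerGraph F m).Adj (Sum.inr (Wenger.lineThrough m p' 0)) (Sum.inl p') :=
      Wenger.lineThrough_adj m p' 0
    exact ⟨w.concat e, by rw [SimpleGraph.Walk.length_concat, hw]⟩
  · obtain ⟨w, hw⟩ := Wenger.pointToLine m hm1 hcard p l'
    exact ⟨w, by omega⟩
  · obtain ⟨w, hw⟩ := Wenger.pointToLine m hm1 hcard p' l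
    exact ⟨w.reverse, by rw [SimpleGraph.Walk.length_reverse, hw]; omega⟩
  · have e : (WengerGraph F m).Adj (Sum.inr l) (Sum.inl (Wenger.pointOn m l 0)) :=
      Wenger.pointOn_adj m l 0
    obtain ⟨w, hw⟩ := Wenger.pointToLine m hm1 hcard (Wenger.pointOn m l 0) l'
    exact ⟨SimpleGraph.Walk.cons e w, by rw [SimpleGraph.Walk.length_cons, hw]⟩
end

section
/- Let q be a prime power and let d and i be integers with 0 ≤ i ≤ d ≤ q − 1. Then the number of monic polynomials in F_q[X] of degree d having exactly i distinct roots in F_q equals C(q,i) · ∑_{k=0}^{d−i} (−1)^k · C(q−i,k) · q^{d−i−k}. -/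
open Finset Polynomial

set_option linter.unusedSectionVars false
set_option linter.unusedTactic false
set_option maxHeartbeats 1000000

namespace KKaux

variable {F : Type} [Field F] [Fintype F]

open Classical in
noncomputable def rset (f : F[X]) : Finset F := Finset.univ.filter fun u => f.eval u = 0

lemma mem_rset {f : F[X]} {u : F} : u ∈ rset f ↔ f.eval u = 0 := by
  simp [rset]

lemma monicSet_eq (m : ℕ) :
    {f : F[X] | f.Monic ∧ f.natDegree = m} =
      (fun g => g + X ^ m) '' ((degreeLT F m : Submodule F F[X]) : Set F[X]) := by
  ext f
  simp only [Set.mem_image, SetLike.mem_coe, mem_degreeLT, Set.mem_setOf_eq]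
  constructor
  · rintro ⟨hm, hdeg⟩
    have hf0 : f ≠ 0 := hm.ne_zero
    have hdf : f.degree = ((X : F[X]) ^ m).degree := by
      rw [degree_X_pow, degree_eq_natDegree hf0, hdeg]
    refine ⟨f - X ^ m, ?_, by ring⟩
    rcases eq_or_ne (f - X ^ m) 0 with h | h
    · simp only [h, degree_zero]; exact WithBot.bot_lt_coe m
    · have := degree_sub_lt hdf hf0 (by rw [hm.leadingCoeff, leadingCoeff_X_pow])
      calc (f - X^m).degree < f.degree := this
        _ = m := by rw [degree_eq_natDegree hf0, hdeg]
  · rintro ⟨g, hg, rfl⟩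
    have hg' : g.degree < ((X : F[X]) ^ m).degree := by rwa [degree_X_pow]
    have hmonic : (X ^ m + g : F[X]).Monic := monic_X_pow_add hg
    have hd : (X ^ m + g : F[X]).degree = m := by
      rw [degree_add_eq_left_of_degree_lt hg', degree_X_pow]
    constructor
    · simpa [add_comm] using hmonic
    · rw [add_comm]; exact natDegree_eq_of_degree_eq_some hd

lemma monicSet_finite (m : ℕ) : {f : F[X] | f.Monic ∧ f.natDegree = m}.Finite := by
  rw [monicSet_eq]
  have : Finite ((degreeLT F m : Submodule F F[X]) : Set F[X]) :=
    Finite.of_equiv _ (degreeLTEquiv F m).toEquiv.symm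
  exact (Set.toFinite _).image _

lemma monicSet_ncard (m : ℕ) :
    {f : F[X] | f.Monic ∧ f.natDegree = m}.ncard = Fintype.card F ^ m := by
  rw [monicSet_eq, Set.ncard_image_of_injective _ (add_left_injective _)]
  rw [← Nat.card_coe_set_eq]
  rw [Nat.card_congr ((Equiv.setCongr rfl).trans (degreeLTEquiv F m).toEquiv)]
  simp [Nat.card_eq_fintype_card]

noncomputable def Md (F : Type) [Field F] [Fintype F] (m : ℕ) : Finset F[X] :=
  (monicSet_finite m).toFinset

lemma mem_Md {m : ℕ} {f : F[X]} : f ∈ Md F m ↔ f.Monic ∧ f.natDegree = m := by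
  simp [Md, Set.Finite.mem_toFinset]

lemma card_Md (m : ℕ) : (Md F m).card = Fintype.card F ^ m := by
  rw [← monicSet_ncard m, Md, Set.ncard_eq_toFinset_card _ (monicSet_finite m)]

open Classical in
noncomputable def B (F : Type) [Field F] [Fintype F] (d : ℕ) (S : Finset F) : Finset F[X] :=
  (Md F d).filter fun f => S ⊆ rset f

open Classical in
noncomputable def E (F : Type) [Field F] [Fintype F] (d : ℕ) (S : Finset F) : Finset F[X] :=
  (Md F d).filter fun f => rset f = S

lemma mem_B {d : ℕ} {S : Finset F} {f : F[X]} :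
    f ∈ B F d S ↔ f.Monic ∧ f.natDegree = d ∧ S ⊆ rset f := by
  simp [B, mem_Md, mem_filter, and_assoc]

lemma mem_E {d : ℕ} {S : Finset F} {f : F[X]} :
    f ∈ E F d S ↔ f.Monic ∧ f.natDegree = d ∧ rset f = S := by
  simp [E, mem_Md, mem_filter, and_assoc]

lemma subset_rset_iff_dvd {f : F[X]} (hf : f ≠ 0) (S : Finset F) :
    S ⊆ rset f ↔ (∏ u ∈ S, (X - C u)) ∣ f := by
  rw [Finset.prod, Multiset.prod_X_sub_C_dvd_iff_le_roots hf,
    Multiset.le_iff_subset S.nodup]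
  constructor
  · intro h u hu
    exact (mem_roots hf).2 (mem_rset.1 (h hu))
  · intro h u hu
    rw [mem_rset]
    exact isRoot_of_mem_roots (h hu)

lemma card_B_of_le {d : ℕ} {S : Finset F} (hS : S.card ≤ d) :
    (B F d S).card = Fintype.card F ^ (d - S.card) := by
  classical
  set P : F[X] := ∏ u ∈ S, (X - C u) with hP
  have hPm : P.Monic := monic_prod_of_monic _ _ fun u _ => monic_X_sub_C u
  have hPd : P.natDegree = S.card := by
    rw [hP, natDegree_prod _ _ fun u _ => X_sub_C_ne_zero u]
    simp
  have himg : B F d S = (Md F (d - S.card)).image (· * P) := by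
    ext f
    simp only [mem_B, Finset.mem_image, mem_Md]
    constructor
    · rintro ⟨hm, hdeg, hroots⟩
      obtain ⟨g, hg⟩ := (subset_rset_iff_dvd hm.ne_zero S).1 hroots
      rw [← hP] at hg
      have hg' : g.Monic := hPm.of_mul_monic_left (by rwa [← hg])
      have hdm : f.natDegree = P.natDegree + g.natDegree := by
        rw [hg, hPm.natDegree_mul hg']
      refine ⟨g, ⟨hg', ?_⟩, by rw [hg]; ring⟩
      omega
    · rintro ⟨g, ⟨hgm, hgdeg⟩, rfl⟩
      have hm : (g * P).Monic := hgm.mul hPm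
      refine ⟨hm, ?_, ?_⟩
      · rw [hgm.natDegree_mul hPm, hgdeg, hPd]; omega
      · rw [subset_rset_iff_dvd hm.ne_zero, ← hP]
        exact Dvd.intro_left g rfl
  rw [himg, Finset.card_image_of_injective _ (mul_left_injective₀ hPm.ne_zero), card_Md]

lemma rset_subset_d {d : ℕ} {f : F[X]} (hm : f.Monic) (hdeg : f.natDegree = d) :
    (rset f).card ≤ d := by
  classical
  have h1 : rset f ⊆ f.roots.toFinset := by
    intro u hu
    rw [Multiset.mem_toFinset, mem_roots hm.ne_zero]
    exact mem_rset.1 hu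
  calc (rset f).card ≤ f.roots.toFinset.card := Finset.card_le_card h1
    _ ≤ Multiset.card f.roots := f.roots.toFinset_card_le
    _ ≤ f.natDegree := f.card_roots'
    _ = d := hdeg

lemma B_empty_of_gt {d : ℕ} {S : Finset F} (hS : d < S.card) : B F d S = ∅ := by
  rw [Finset.eq_empty_iff_forall_notMem]
  intro f hf
  rw [mem_B] at hf
  have := Finset.card_le_card hf.2.2
  have := rset_subset_d hf.1 hf.2.1
  omega

section Dec

variable [DecidableEq F]

lemma card_B_eq_sum (d : ℕ) (T : Finset F) :
    (B F d T).card = ∑ V ∈ (univ : Finset (Finset F)).filter (T ⊆ ·), (E F d V).card := by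
  classical
  rw [Finset.card_eq_sum_card_fiberwise (f := rset)
    (t := (univ : Finset (Finset F)).filter (T ⊆ ·)) (fun f hf => by
      simp only [Finset.mem_coe, mem_filter, mem_univ, true_and]
      exact (mem_B.1 hf).2.2)]
  refine Finset.sum_congr rfl fun V hV => ?_
  simp only [mem_filter, mem_univ, true_and] at hV
  congr 1
  ext f
  simp only [mem_filter, mem_B, mem_E]
  constructor
  · rintro ⟨⟨h1, h2, _⟩, h4⟩; exact ⟨h1, h2, h4⟩
  · rintro ⟨h1, h2, h4⟩; exact ⟨⟨h1, h2, h4 ▸ hV⟩, h4⟩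

lemma card_E_eq (d : ℕ) (S : Finset F) :
    ((E F d S).card : ℤ) =
      ∑ U ∈ Sᶜ.powerset, (-1 : ℤ) ^ U.card * ((B F d (S ∪ U)).card : ℤ) := by
  classical
  have hB : ∀ U : Finset F, ((B F d (S ∪ U)).card : ℤ) =
      ∑ V ∈ (univ : Finset (Finset F)), (if S ∪ U ⊆ V then ((E F d V).card : ℤ) else 0) := by
    intro U
    rw [card_B_eq_sum, Finset.sum_filter]
    push_cast
    rfl
  have key : ∀ V : Finset F,
      (∑ U ∈ Sᶜ.powerset, if S ∪ U ⊆ V then (-1 : ℤ) ^ U.card else 0) =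
        if V = S then 1 else 0 := by
    intro V
    rw [← Finset.sum_filter]
    have hfil : Sᶜ.powerset.filter (fun U => S ∪ U ⊆ V) =
        if S ⊆ V then (V \ S).powerset else ∅ := by
      split_ifs with h
      · ext U
        simp only [mem_filter, mem_powerset, Finset.union_subset_iff, Finset.subset_sdiff]
        constructor
        · rintro ⟨h1, _, h3⟩
          exact ⟨h3, Finset.disjoint_left.2 fun a ha hb => Finset.mem_compl.1 (h1 ha) hb⟩
        · rintro ⟨h1, h2⟩
          exact ⟨fun a ha => Finset.mem_compl.2 (Finset.disjoint_left.1 h2 ha), h, h1⟩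
      · ext U
        simp only [mem_filter, mem_powerset, Finset.union_subset_iff, Finset.notMem_empty,
          iff_false, not_and, and_imp]
        intro _ hSV _
        exact h hSV
    rw [hfil]
    by_cases h : S ⊆ V
    · rw [if_pos h, Finset.sum_powerset_neg_one_pow_card]
      by_cases hVS : V = S
      · rw [if_pos hVS, if_pos (by simp [hVS])]
      · rw [if_neg hVS, if_neg (fun hsub =>
          hVS (Finset.Subset.antisymm (Finset.sdiff_eq_empty_iff_subset.1 hsub) h))]
    · rw [if_neg h, if_neg, Finset.sum_empty]
      intro hVS
      exact h (hVS ▸ Finset.Subset.refl S)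
  symm
  calc (∑ U ∈ Sᶜ.powerset, (-1 : ℤ) ^ U.card * ((B F d (S ∪ U)).card : ℤ))
      = ∑ U ∈ Sᶜ.powerset, ∑ V ∈ (univ : Finset (Finset F)),
          (if S ∪ U ⊆ V then (-1 : ℤ) ^ U.card else 0) * ((E F d V).card : ℤ) := by
        refine Finset.sum_congr rfl fun U _ => ?_
        rw [hB U, Finset.mul_sum]
        refine Finset.sum_congr rfl fun V _ => ?_
        split_ifs <;> ring
    _ = ∑ V ∈ (univ : Finset (Finset F)), ∑ U ∈ Sᶜ.powerset,
          (if S ∪ U ⊆ V then (-1 : ℤ) ^ U.card else 0) * ((E F d V).card : ℤ) :=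
        Finset.sum_comm
    _ = ∑ V ∈ (univ : Finset (Finset F)),
          (if V = S then (1 : ℤ) else 0) * ((E F d V).card : ℤ) := by
        refine Finset.sum_congr rfl fun V _ => ?_
        rw [← Finset.sum_mul, key V]
    _ = ((E F d S).card : ℤ) := by
        rw [Finset.sum_congr rfl (fun V _ => by
          split_ifs with hv <;> simp [hv] :
          ∀ V ∈ (univ : Finset (Finset F)),
            (if V = S then (1 : ℤ) else 0) * ((E F d V).card : ℤ) =
              if V = S then ((E F d V).card : ℤ) else 0)]
        rw [Finset.sum_ite_eq' univ S (fun V => ((E F d V).card : ℤ))]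
        simp

lemma card_E_formula {q d i : ℕ} (hq : Fintype.card F = q) {S : Finset F}
    (hSi : S.card = i) (hid : i ≤ d) (hdq : d ≤ q) :
    ((E F d S).card : ℤ) = ∑ k ∈ Finset.range (d - i + 1),
      (-1 : ℤ) ^ k * ((q - i).choose k : ℤ) * (q : ℤ) ^ (d - i - k) := by
  rw [card_E_eq]
  have hcompl : Sᶜ.card = q - i := by rw [Finset.card_compl, hSi, hq]
  set g : ℕ → ℤ := fun k => (-1 : ℤ) ^ k * (if i + k ≤ d then (q : ℤ) ^ (d - i - k) else 0)
    with hg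
  have hstep : ∀ U ∈ Sᶜ.powerset, (-1 : ℤ) ^ U.card * ((B F d (S ∪ U)).card : ℤ) = g U.card := by
    intro U hU
    rw [Finset.mem_powerset] at hU
    have hdisj : Disjoint S U := Finset.disjoint_left.2 fun a ha hb =>
      Finset.mem_compl.1 (hU hb) ha
    have hcard : (S ∪ U).card = i + U.card := by
      rw [Finset.card_union_of_disjoint hdisj, hSi]
    simp only [hg]
    by_cases hle : i + U.card ≤ d
    · rw [if_pos hle, card_B_of_le (by omega : (S ∪ U).card ≤ d), hcard, hq]
      push_cast
      congr 2
      omega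
    · rw [if_neg hle, B_empty_of_gt (by omega : d < (S ∪ U).card)]
      simp
  rw [Finset.sum_congr rfl hstep, Finset.sum_powerset_apply_card g, hcompl]
  have hsub : Finset.range (d - i + 1) ⊆ Finset.range (q - i + 1) :=
    Finset.range_subset_range.2 (by omega)
  rw [← Finset.sum_subset hsub (fun k hk hk' => ?_)]
  · refine Finset.sum_congr rfl fun k hk => ?_
    rw [Finset.mem_range] at hk
    simp only [hg]
    rw [if_pos (by omega)]
    rw [nsmul_eq_mul]
    push_cast
    ring
  · rw [Finset.mem_range] at hk
    rw [Finset.mem_range, not_lt] at hk'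
    simp only [hg]
    rw [if_neg (by omega)]
    simp

lemma final {q d i : ℕ} (hq : Fintype.card F = q) (hid : i ≤ d) (hdq : d ≤ q) :
    ({f : Polynomial F | f.Monic ∧ f.natDegree = d ∧
        {u : F | Polynomial.eval u f = 0}.ncard = i}.ncard : ℤ) =
      (q.choose i : ℤ) * ∑ k ∈ Finset.range (d - i + 1),
        (-1 : ℤ) ^ k * ((q - i).choose k : ℤ) * (q : ℤ) ^ (d - i - k) := by
  classical
  set Mdi : Finset F[X] := (Md F d).filter (fun f => (rset f).card = i) with hMdi
  have hsetEq : {f : Polynomial F | f.Monic ∧ f.natDegree = d ∧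
      {u : F | Polynomial.eval u f = 0}.ncard = i} = ↑Mdi := by
    ext f
    have hroots : {u : F | Polynomial.eval u f = 0} = ↑(rset f) := by
      ext u; simp [mem_rset]
    simp only [Set.mem_setOf_eq, hroots, Set.ncard_coe_finset, hMdi, Finset.coe_filter,
      mem_Md, and_assoc]
  rw [hsetEq, Set.ncard_coe_finset]
  have hfib : Mdi.card = ∑ S ∈ Finset.powersetCard i (univ : Finset F), (E F d S).card := by
    rw [Finset.card_eq_sum_card_fiberwise (f := rset)
      (t := Finset.powersetCard i (univ : Finset F)) (fun f hf => by
        rw [Finset.mem_coe, Finset.mem_powersetCard_univ]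
        exact (Finset.mem_filter.1 hf).2)]
    refine Finset.sum_congr rfl fun S hS => ?_
    rw [Finset.mem_powersetCard_univ] at hS
    congr 1
    ext f
    simp only [hMdi, Finset.mem_filter, mem_Md, mem_E, and_assoc]
    constructor
    · rintro ⟨h1, h2, _, h4⟩; exact ⟨h1, h2, h4⟩
    · rintro ⟨h1, h2, h4⟩; exact ⟨h1, h2, h4 ▸ hS, h4⟩
  rw [hfib]
  push_cast
  rw [Finset.sum_congr rfl (fun S hS => card_E_formula hq
    (Finset.mem_powersetCard_univ.1 hS) hid hdq)]
  rw [Finset.sum_const, Finset.card_powersetCard, Finset.card_univ, hq, nsmul_eq_mul]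

end Dec

end KKaux

/-- Knopfmacher–Knopfmacher. For a prime power `q` and integers
`0 ≤ i ≤ d ≤ q − 1`, the number of monic polynomials of degree `d` over `F_q` with
exactly `i` distinct roots in `F_q` is `C(q,i)·∑_{k=0}^{d−i} (−1)^k·C(q−i,k)·q^{d−i−k}`. -/
theorem count_monic_polynomials_with_roots (q d i : ℕ) (F : Type) [Field F] [Fintype F]
    (hq : Fintype.card F = q) (hid : i ≤ d) (hd : d ≤ q - 1) :
    ({f : Polynomial F | f.Monic ∧ f.natDegree = d ∧
        {u : F | Polynomial.eval u f = 0}.ncard = i}.ncard : ℤ) =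
      (q.choose i : ℤ) * ∑ k ∈ Finset.range (d - i + 1),
        (-1 : ℤ) ^ k * ((q - i).choose k : ℤ) * (q : ℤ) ^ (d - i - k) := by
  classical
  exact KKaux.final hq hid (le_trans hd (Nat.sub_le q 1))
end

section
/- Let q be a prime power and let m and i be integers with 0 ≤ i ≤ m ≤ q − 1. Then the number of nonzero polynomials in F_q[X] of degree at most m (not necessarily monic) having exactly i distinct roots in F_q equals (q−1)·C(q,i)·∑_{d=i}^{m} ∑_{k=0}^{d−i} (−1)^k · C(q−i,k) · q^{d−i−k}. -/
open Finset Polynomial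
open scoped Classical

variable {F : Type} [Field F] [Fintype F]

/-- Polynomials of degree < n as a Finset. -/
noncomputable def polyB (F : Type) [Field F] [Fintype F] (n : ℕ) : Finset (Polynomial F) :=
  Finset.univ.image fun v : Fin n → F =>
    (((Polynomial.degreeLTEquiv F n).symm v : Polynomial.degreeLT F n) : Polynomial F)

lemma mem_polyB' {e : ℕ} {g : Polynomial F} : g ∈ polyB F (e+1) ↔ g.natDegree ≤ e := by
  constructor
  · rintro hg
    simp only [polyB, mem_image] at hg
    obtain ⟨v, _, rfl⟩ := hg
    have := ((Polynomial.degreeLTEquiv F (e+1)).symm v).2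
    rw [Polynomial.mem_degreeLT] at this
    rcases eq_or_ne (((Polynomial.degreeLTEquiv F (e+1)).symm v : Polynomial.degreeLT F (e+1)) : Polynomial F) 0 with h | h
    · simp [h]
    · rw [Polynomial.degree_eq_natDegree h] at this
      exact_mod_cast Nat.lt_succ_iff.mp (by exact_mod_cast this)
  · intro hg
    have hmem : g ∈ Polynomial.degreeLT F (e+1) := by
      rw [Polynomial.mem_degreeLT]
      rcases eq_or_ne g 0 with rfl | h
      · simp [Polynomial.degree_zero]
      · rw [Polynomial.degree_eq_natDegree h]
        exact_mod_cast Nat.lt_succ_iff.mpr hg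
    simp only [polyB, mem_image]
    exact ⟨Polynomial.degreeLTEquiv F (e+1) ⟨g, hmem⟩, mem_univ _, by simp⟩

lemma card_polyB (n : ℕ) : (polyB F n).card = Fintype.card F ^ n := by
  rw [polyB, Finset.card_image_of_injective _
    (fun a b h => (Polynomial.degreeLTEquiv F n).symm.injective (Subtype.val_injective h))]
  simp

lemma card_polyB_ne (n : ℕ) :
    ((polyB F n).filter (· ≠ 0)).card = Fintype.card F ^ n - 1 := by
  have h0 : (0 : Polynomial F) ∈ polyB F n := by
    cases n with
    | zero =>
      refine Finset.mem_image.mpr ⟨0, mem_univ _, ?_⟩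
      simp
    | succ e => exact mem_polyB'.mpr (by simp)
  rw [Finset.filter_ne', Finset.card_erase_of_mem h0, card_polyB]

lemma prod_X_sub_C_dvd_iff {T : Finset F} {g : Polynomial F} (hg : g ≠ 0) :
    (∏ t ∈ T, (X - C t)) ∣ g ↔ ∀ t ∈ T, g.eval t = 0 := by
  rw [Finset.prod, Multiset.prod_X_sub_C_dvd_iff_le_roots hg,
    Multiset.le_iff_subset T.nodup]
  constructor
  · intro h t ht
    exact ((Polynomial.mem_roots hg).mp (h (Finset.mem_def.mp ht)))
  · intro h x hx
    exact (Polynomial.mem_roots hg).mpr (h x (Finset.mem_def.mpr hx))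

lemma natDegree_prod_X_sub_C (T : Finset F) :
    (∏ t ∈ T, (X - C t : Polynomial F)).natDegree = T.card := by
  rw [Polynomial.natDegree_prod _ _ (fun t _ => X_sub_C_ne_zero t)]
  simp

lemma count_dvd {e k : ℕ} {T : Finset F} (hT : T.card = k) (hk : k ≤ e) :
    ((polyB F (e+1)).filter fun g => g ≠ 0 ∧ ∀ t ∈ T, g.eval t = 0).card
      = Fintype.card F ^ (e + 1 - k) - 1 := by
  set D : Polynomial F := ∏ t ∈ T, (X - C t) with hD
  have hDne : D ≠ 0 := Finset.prod_ne_zero_iff.mpr fun t _ => X_sub_C_ne_zero t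
  have hDdeg : D.natDegree = k := by rw [hD, natDegree_prod_X_sub_C, hT]
  have hcast : e + 1 - k = (e - k) + 1 := by omega
  rw [← card_polyB_ne (F := F) (e + 1 - k), hcast]
  apply Finset.card_bij' (fun f _ => f / D) (fun g _ => D * g)
  · intro f hf
    rw [Finset.mem_filter] at hf
    obtain ⟨hf1, hfne, hroots⟩ := hf
    have hdvd : D ∣ f := (prod_X_sub_C_dvd_iff hfne).mpr hroots
    have heq : D * (f / D) = f := EuclideanDomain.mul_div_cancel' hDne hdvd
    have hne : f / D ≠ 0 := by
      intro h0
      rw [h0, mul_zero] at heq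
      exact hfne heq.symm
    rw [Finset.mem_filter]
    refine ⟨mem_polyB'.mpr ?_, hne⟩
    have hdf : f.natDegree = k + (f / D).natDegree := by
      conv_lhs => rw [← heq]
      rw [Polynomial.natDegree_mul hDne hne, hDdeg]
    have := mem_polyB'.mp hf1
    omega
  · intro g hg
    rw [Finset.mem_filter] at hg
    obtain ⟨hg1, hgne⟩ := hg
    rw [Finset.mem_filter]
    refine ⟨mem_polyB'.mpr ?_, mul_ne_zero hDne hgne, fun t ht => ?_⟩
    · rw [Polynomial.natDegree_mul hDne hgne, hDdeg]
      have := mem_polyB'.mp hg1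
      omega
    · rcases Finset.dvd_prod_of_mem (fun t => (X - C t : Polynomial F)) ht with ⟨c, hc⟩
      rw [hD, hc]
      simp
  · intro f hf
    rw [Finset.mem_filter] at hf
    obtain ⟨hf1, hfne, hroots⟩ := hf
    exact EuclideanDomain.mul_div_cancel' hDne ((prod_X_sub_C_dvd_iff hfne).mpr hroots)
  · intro g _
    exact mul_div_cancel_left₀ _ hDne

lemma inclusion_exclusion (e : ℕ) (A : Finset F) :
    ((((polyB F (e+1)).filter fun g => g ≠ 0 ∧ ∀ a ∈ A, g.eval a ≠ 0).card : ℤ))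
      = ∑ T ∈ A.powerset, (-1 : ℤ) ^ T.card *
          (((polyB F (e+1)).filter fun g => g ≠ 0 ∧ ∀ t ∈ T, g.eval t = 0).card : ℤ) := by
  have key : ∀ (P : Polynomial F → Prop) [DecidablePred P],
      (((polyB F (e+1)).filter fun g => g ≠ 0 ∧ P g).card : ℤ)
        = ∑ g ∈ (polyB F (e+1)).filter (· ≠ 0), (if P g then (1:ℤ) else 0) := by
    intro P _
    rw [Finset.sum_boole, Finset.filter_filter]
  rw [key]
  have : ∀ T ∈ A.powerset, (-1 : ℤ) ^ T.card *
          (((polyB F (e+1)).filter fun g => g ≠ 0 ∧ ∀ t ∈ T, g.eval t = 0).card : ℤ)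
      = ∑ g ∈ (polyB F (e+1)).filter (· ≠ 0),
          (-1 : ℤ) ^ T.card * (if ∀ t ∈ T, g.eval t = 0 then (1:ℤ) else 0) := by
    intro T _
    rw [← Finset.mul_sum, ← key]
  rw [Finset.sum_congr rfl this, Finset.sum_comm]
  apply Finset.sum_congr rfl
  intro g _
  have hsub : (A.filter fun a => g.eval a = 0).powerset ⊆ A.powerset :=
    Finset.powerset_mono.mpr (Finset.filter_subset _ _)
  rw [show (∑ T ∈ A.powerset, (-1 : ℤ) ^ T.card * (if ∀ t ∈ T, g.eval t = 0 then (1:ℤ) else 0))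
      = ∑ T ∈ (A.filter fun a => g.eval a = 0).powerset, (-1 : ℤ) ^ T.card from ?_]
  · rw [Finset.sum_powerset_neg_one_pow_card]
    by_cases h : ∀ a ∈ A, g.eval a ≠ 0
    · rw [if_pos h, if_pos]
      rw [Finset.filter_eq_empty_iff]
      exact h
    · rw [if_neg h, if_neg]
      rw [show (¬filter (fun a => eval a g = 0) A = ∅) ↔
          ¬∀ a ∈ A, eval a g ≠ 0 from not_congr Finset.filter_eq_empty_iff]
      push_neg at h ⊢
      obtain ⟨a, ha, hval⟩ := h
      exact ⟨a, ha, hval⟩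
  · rw [← Finset.sum_subset hsub]
    · apply Finset.sum_congr rfl
      intro T hT
      rw [Finset.mem_powerset] at hT
      rw [if_pos, mul_one]
      intro t ht
      exact (Finset.mem_filter.mp (hT ht)).2
    · intro T hTA hTf
      rw [Finset.mem_powerset] at hTA hTf
      rw [if_neg, mul_zero]
      intro hall
      exact hTf fun t ht => Finset.mem_filter.mpr ⟨hTA ht, hall t ht⟩

lemma rootfin_eq_iff {f : Polynomial F} {R : Finset F} :
    (Finset.univ.filter fun u => f.eval u = 0) = R ↔ ∀ u, (f.eval u = 0 ↔ u ∈ R) := by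
  rw [Finset.ext_iff]
  constructor
  · intro h u
    simpa using h u
  · intro h u
    simpa using h u

lemma rootset_bij {m i : ℕ} {R : Finset F} (hR : R.card = i) (him : i ≤ m) :
    ((polyB F (m+1)).filter fun f => f ≠ 0 ∧ (Finset.univ.filter fun u => f.eval u = 0) = R).card
      = ((polyB F (m-i+1)).filter fun g => g ≠ 0 ∧ ∀ a ∈ Rᶜ, g.eval a ≠ 0).card := by
  set D : Polynomial F := ∏ t ∈ R, (X - C t) with hD
  have hDne : D ≠ 0 := Finset.prod_ne_zero_iff.mpr fun t _ => X_sub_C_ne_zero t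
  have hDdeg : D.natDegree = i := by rw [hD, natDegree_prod_X_sub_C, hR]
  have hevalD : ∀ a : F, D.eval a = ∏ t ∈ R, (a - t) := by
    intro a; rw [hD, Polynomial.eval_prod]; simp
  have hevalD_ne : ∀ a : F, a ∉ R → D.eval a ≠ 0 := by
    intro a ha
    rw [hevalD]
    exact Finset.prod_ne_zero_iff.mpr fun t ht => sub_ne_zero_of_ne (fun h => ha (h ▸ ht))
  have hevalD_zero : ∀ r ∈ R, D.eval r = 0 := by
    intro r hr
    rw [hevalD]
    exact Finset.prod_eq_zero hr (sub_self r)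
  apply Finset.card_bij' (fun f _ => f / D) (fun g _ => D * g)
  · intro f hf
    rw [Finset.mem_filter] at hf
    obtain ⟨hf1, hfne, hroots⟩ := hf
    rw [rootfin_eq_iff] at hroots
    have hdvd : D ∣ f := (prod_X_sub_C_dvd_iff hfne).mpr fun t ht => (hroots t).mpr ht
    have heq : D * (f / D) = f := EuclideanDomain.mul_div_cancel' hDne hdvd
    have hne : f / D ≠ 0 := by
      intro h0; rw [h0, mul_zero] at heq; exact hfne heq.symm
    rw [Finset.mem_filter]
    refine ⟨mem_polyB'.mpr ?_, hne, fun a ha => ?_⟩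
    · have hdf : f.natDegree = i + (f / D).natDegree := by
        conv_lhs => rw [← heq]
        rw [Polynomial.natDegree_mul hDne hne, hDdeg]
      have := mem_polyB'.mp hf1
      omega
    · rw [Finset.mem_compl] at ha
      intro h0
      have : f.eval a = 0 := by
        rw [← heq, Polynomial.eval_mul, h0, mul_zero]
      exact ha ((hroots a).mp this)
  · intro g hg
    rw [Finset.mem_filter] at hg
    obtain ⟨hg1, hgne, hgroots⟩ := hg
    rw [Finset.mem_filter]
    refine ⟨mem_polyB'.mpr ?_, mul_ne_zero hDne hgne, rootfin_eq_iff.mpr fun u => ?_⟩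
    · rw [Polynomial.natDegree_mul hDne hgne, hDdeg]
      have := mem_polyB'.mp hg1
      omega
    · rw [Polynomial.eval_mul]
      constructor
      · intro h0
        by_contra hu
        exact (mul_ne_zero (hevalD_ne u hu) (hgroots u (Finset.mem_compl.mpr hu))) h0
      · intro hu
        rw [hevalD_zero u hu, zero_mul]
  · intro f hf
    rw [Finset.mem_filter] at hf
    obtain ⟨hf1, hfne, hroots⟩ := hf
    rw [rootfin_eq_iff] at hroots
    exact EuclideanDomain.mul_div_cancel' hDne
      ((prod_X_sub_C_dvd_iff hfne).mpr fun t ht => (hroots t).mpr ht)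
  · intro g _
    exact mul_div_cancel_left₀ _ hDne

lemma count_IE (e : ℕ) (A : Finset F) :
    ((((polyB F (e+1)).filter fun g => g ≠ 0 ∧ ∀ a ∈ A, g.eval a ≠ 0).card : ℤ))
      = ∑ k ∈ Finset.range (A.card + 1), (-1 : ℤ) ^ k * (A.card.choose k : ℤ) *
          (if k ≤ e then ((Fintype.card F : ℤ) ^ (e+1-k) - 1) else 0) := by
  have hq1 : 1 ≤ Fintype.card F := Fintype.card_pos
  have hterm : ∀ T : Finset F,
      (((polyB F (e+1)).filter fun g => g ≠ 0 ∧ ∀ t ∈ T, g.eval t = 0).card : ℤ)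
        = if T.card ≤ e then ((Fintype.card F : ℤ) ^ (e+1-T.card) - 1) else 0 := by
    intro T
    by_cases hk : T.card ≤ e
    · rw [if_pos hk, count_dvd rfl hk]
      have : 1 ≤ Fintype.card F ^ (e + 1 - T.card) := Nat.one_le_pow _ _ hq1
      push_cast [Nat.cast_sub this]
      ring
    · rw [if_neg hk]
      norm_cast
      rw [Finset.card_eq_zero, Finset.filter_eq_empty_iff]
      rintro g hg ⟨hgne, hroots⟩
      have hdvd := (prod_X_sub_C_dvd_iff hgne).mpr hroots
      have h1 := Polynomial.natDegree_le_of_dvd hdvd hgne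
      rw [natDegree_prod_X_sub_C] at h1
      have h2 := mem_polyB'.mp hg
      omega
  rw [inclusion_exclusion, Finset.sum_powerset]
  apply Finset.sum_congr rfl
  intro j hj
  have : ∀ T ∈ Finset.powersetCard j A, (-1 : ℤ) ^ T.card *
        (((polyB F (e+1)).filter fun g => g ≠ 0 ∧ ∀ t ∈ T, g.eval t = 0).card : ℤ)
      = (fun k => (-1 : ℤ) ^ k * (if k ≤ e then ((Fintype.card F : ℤ) ^ (e+1-k) - 1) else 0)) T.card := by
    intro T _
    rw [hterm]
  rw [Finset.sum_congr rfl this, Finset.sum_powersetCard j A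
    (fun k => (-1 : ℤ) ^ k * (if k ≤ e then ((Fintype.card F : ℤ) ^ (e+1-k) - 1) else 0))]
  simp only [nsmul_eq_mul]
  ring

lemma main_count {m i : ℕ} (him : i ≤ m) :
    ((((polyB F (m+1)).filter fun f => f ≠ 0 ∧
        (Finset.univ.filter fun u => f.eval u = 0).card = i).card : ℤ))
      = ((Fintype.card F).choose i : ℤ) *
        ∑ k ∈ Finset.range ((Fintype.card F - i) + 1), (-1 : ℤ) ^ k *
          ((Fintype.card F - i).choose k : ℤ) *
          (if k ≤ m - i then ((Fintype.card F : ℤ) ^ (m-i+1-k) - 1) else 0) := by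
  set q := Fintype.card F with hq
  have hpart : ((polyB F (m+1)).filter fun f => f ≠ 0 ∧
        (Finset.univ.filter fun u => f.eval u = 0).card = i).card
      = ∑ R ∈ Finset.powersetCard i (Finset.univ : Finset F),
          ((polyB F (m+1)).filter fun f => f ≠ 0 ∧
            (Finset.univ.filter fun u => f.eval u = 0) = R).card := by
    rw [Finset.card_eq_sum_card_fiberwise
      (f := fun f : Polynomial F => Finset.univ.filter fun u => f.eval u = 0)
      (t := Finset.powersetCard i (Finset.univ : Finset F))]
    · apply Finset.sum_congr rfl
      intro R hR
      congr 1
      ext f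
      simp only [Finset.mem_filter]
      rw [Finset.mem_powersetCard] at hR
      constructor
      · rintro ⟨⟨h1, h2, _⟩, h4⟩
        exact ⟨h1, h2, h4⟩
      · rintro ⟨h1, h2, h4⟩
        exact ⟨⟨h1, h2, by rw [h4, hR.2]⟩, h4⟩
    · intro f hf
      rw [Finset.mem_coe, Finset.mem_filter] at hf
      exact Finset.mem_coe.mpr (Finset.mem_powersetCard.mpr ⟨Finset.subset_univ _, hf.2.2⟩)
  rw [hpart]
  push_cast
  have hper : ∀ R ∈ Finset.powersetCard i (Finset.univ : Finset F),
      ((((polyB F (m+1)).filter fun f => f ≠ 0 ∧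
        (Finset.univ.filter fun u => f.eval u = 0) = R).card : ℤ))
      = ∑ k ∈ Finset.range ((q - i) + 1), (-1 : ℤ) ^ k *
          ((q - i).choose k : ℤ) *
          (if k ≤ m - i then ((q : ℤ) ^ (m-i+1-k) - 1) else 0) := by
    intro R hR
    rw [Finset.mem_powersetCard] at hR
    have hcompl : Rᶜ.card = q - i := by
      rw [Finset.card_compl, hR.2, hq]
    rw [rootset_bij hR.2 him]
    have := count_IE (F := F) (m - i) Rᶜ
    rw [hcompl] at this
    rw [show m - i + 1 = (m - i) + 1 from rfl, this]
  rw [Finset.sum_congr rfl hper, Finset.sum_const, Finset.card_powersetCard,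
    Finset.card_univ, nsmul_eq_mul]

lemma algebra_id (q m i : ℕ) (him : i ≤ m) (hm : m + 1 ≤ q) :
    ∑ k ∈ Finset.range ((q-i)+1), (-1:ℤ)^k * ((q-i).choose k : ℤ) *
        (if k ≤ m-i then ((q:ℤ)^(m-i+1-k) - 1) else 0)
      = ((q:ℤ)-1) * ∑ d ∈ Finset.Icc i m, ∑ k ∈ Finset.range (d-i+1),
          (-1:ℤ)^k * ((q-i).choose k : ℤ) * (q:ℤ)^(d-i-k) := by
  set e := m - i with he
  set a := q - i with ha
  have hea : e + 1 ≤ a := by omega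
  -- Step 1: truncate LHS
  have h1 : ∑ k ∈ Finset.range (a+1), (-1:ℤ)^k * ((a).choose k : ℤ) *
        (if k ≤ e then ((q:ℤ)^(e+1-k) - 1) else 0)
      = ∑ k ∈ Finset.range (e+1), (-1:ℤ)^k * ((a).choose k : ℤ) * ((q:ℤ)^(e+1-k) - 1) := by
    rw [← Finset.sum_range_add_sum_Ico _ (by omega : e + 1 ≤ a + 1)]
    have hz : ∑ k ∈ Finset.Ico (e+1) (a+1), (-1:ℤ)^k * ((a).choose k : ℤ) *
        (if k ≤ e then ((q:ℤ)^(e+1-k) - 1) else 0) = 0 := by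
      apply Finset.sum_eq_zero
      intro k hk
      rw [Finset.mem_Ico] at hk
      rw [if_neg (by omega), mul_zero]
    rw [hz, add_zero]
    apply Finset.sum_congr rfl
    intro k hk
    rw [Finset.mem_range] at hk
    rw [if_pos (by omega)]
  rw [h1]
  -- Step 2: reindex RHS over range (e+1)
  have h2 : ∑ d ∈ Finset.Icc i m, ∑ k ∈ Finset.range (d-i+1),
        (-1:ℤ)^k * ((a).choose k : ℤ) * (q:ℤ)^(d-i-k)
      = ∑ d' ∈ Finset.range (e+1), ∑ k ∈ Finset.range (d'+1),
        (-1:ℤ)^k * ((a).choose k : ℤ) * (q:ℤ)^(d'-k) := by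
    rw [← Finset.Ico_add_one_right_eq_Icc, Finset.sum_Ico_eq_sum_range]
    have : m + 1 - i = e + 1 := by omega
    rw [this]
    apply Finset.sum_congr rfl
    intro d' _
    rw [Nat.add_sub_cancel_left]
  rw [h2]
  -- Step 3: triangle swap
  have h3 : ∑ d' ∈ Finset.range (e+1), ∑ k ∈ Finset.range (d'+1),
        (-1:ℤ)^k * ((a).choose k : ℤ) * (q:ℤ)^(d'-k)
      = ∑ k ∈ Finset.range (e+1), ∑ d' ∈ Finset.Icc k e,
        (-1:ℤ)^k * ((a).choose k : ℤ) * (q:ℤ)^(d'-k) := by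
    have hrect : ∀ d' ∈ Finset.range (e+1), ∑ k ∈ Finset.range (d'+1),
        (-1:ℤ)^k * ((a).choose k : ℤ) * (q:ℤ)^(d'-k)
        = ∑ k ∈ Finset.range (e+1),
            (if k ≤ d' then (-1:ℤ)^k * ((a).choose k : ℤ) * (q:ℤ)^(d'-k) else 0) := by
      intro d' hd'
      rw [Finset.mem_range] at hd'
      rw [← Finset.sum_filter]
      have : Finset.filter (fun k => k ≤ d') (Finset.range (e+1)) = Finset.range (d'+1) := by
        ext k
        simp only [Finset.mem_filter, Finset.mem_range]
        omega
      rw [this]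
    rw [Finset.sum_congr rfl hrect, Finset.sum_comm]
    apply Finset.sum_congr rfl
    intro k _
    rw [← Finset.sum_filter]
    have : Finset.filter (fun d' => k ≤ d') (Finset.range (e+1)) = Finset.Icc k e := by
      ext d'
      simp only [Finset.mem_filter, Finset.mem_range, Finset.mem_Icc]
      omega
    rw [this]
  rw [h3, Finset.mul_sum]
  apply Finset.sum_congr rfl
  intro k hk
  rw [Finset.mem_range] at hk
  -- Step 4: geometric sum
  have hgeo : ∑ d' ∈ Finset.Icc k e, (q:ℤ)^(d'-k) = ∑ j ∈ Finset.range (e+1-k), (q:ℤ)^j := by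
    rw [← Finset.Ico_add_one_right_eq_Icc, Finset.sum_Ico_eq_sum_range]
    apply Finset.sum_congr rfl
    intro j _
    rw [Nat.add_sub_cancel_left]
  have hgs : ((q:ℤ)-1) * ∑ j ∈ Finset.range (e+1-k), (q:ℤ)^j = (q:ℤ)^(e+1-k) - 1 := by
    rw [mul_comm, geom_sum_mul]
  calc (-1:ℤ)^k * ((a).choose k : ℤ) * ((q:ℤ)^(e+1-k) - 1)
      = (-1:ℤ)^k * ((a).choose k : ℤ) * (((q:ℤ)-1) * ∑ j ∈ Finset.range (e+1-k), (q:ℤ)^j) := by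
        rw [hgs]
    _ = ((q:ℤ)-1) * ((-1:ℤ)^k * ((a).choose k : ℤ) * ∑ j ∈ Finset.range (e+1-k), (q:ℤ)^j) := by
        ring
    _ = ((q:ℤ)-1) * ∑ d' ∈ Finset.Icc k e, (-1:ℤ)^k * ((a).choose k : ℤ) * (q:ℤ)^(d'-k) := by
        rw [← Finset.mul_sum, hgeo]

/-- For a prime power `q` and integers `0 ≤ i ≤ m ≤ q − 1`, the number
of nonzero polynomials over `F_q` of degree at most `m` having exactly `i` distinct
roots in `F_q` equals `(q−1)·C(q,i)·∑_{d=i}^{m} ∑_{k=0}^{d−i} (−1)^k·C(q−i,k)·q^{d−i−k}`. -/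
theorem count_polynomials_with_roots (q m i : ℕ) (F : Type) [Field F] [Fintype F]
    (hq : Fintype.card F = q) (him : i ≤ m) (hm : m ≤ q - 1) :
    ({f : Polynomial F | f ≠ 0 ∧ f.natDegree ≤ m ∧
        {u : F | Polynomial.eval u f = 0}.ncard = i}.ncard : ℤ) =
      ((q : ℤ) - 1) * (q.choose i : ℤ) *
        ∑ d ∈ Finset.Icc i m, ∑ k ∈ Finset.range (d - i + 1),
          (-1 : ℤ) ^ k * ((q - i).choose k : ℤ) * (q : ℤ) ^ (d - i - k) := by
  subst hq
  have hq1 : 0 < Fintype.card F := Fintype.card_pos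
  have hmq : m + 1 ≤ Fintype.card F := by omega
  have hset : {f : Polynomial F | f ≠ 0 ∧ f.natDegree ≤ m ∧
        {u : F | Polynomial.eval u f = 0}.ncard = i}
      = ↑((polyB F (m+1)).filter fun f => f ≠ 0 ∧
          (Finset.univ.filter fun u => f.eval u = 0).card = i) := by
    ext f
    simp only [Set.mem_setOf_eq, Finset.coe_filter, mem_polyB']
    have hu : {u : F | Polynomial.eval u f = 0}
        = ↑(Finset.univ.filter fun u => f.eval u = 0) := by
      ext u; simp
    rw [hu, Set.ncard_coe_finset]
    tauto
  rw [hset, Set.ncard_coe_finset, main_count him, algebra_id _ _ _ him hmq]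
  ring
end

section
/- For every prime power q and every integer m with 1 ≤ m ≤ q − 1, the identity ∑_{i=0}^{m} C(q,i) · ∑_{d=i}^{m} ∑_{k=0}^{d−i} (−1)^k · C(q−i,k) · q^{d−i−k} = (q^{m+1} − 1)/(q − 1) holds; equivalently, (q−1) · ∑_{i=0}^{m} C(q,i) · ∑_{d=i}^{m} ∑_{k=0}^{d−i} (−1)^k · C(q−i,k) · q^{d−i−k} = q^{m+1} − 1. -/
open Finset

lemma key (q d : ℕ) (hd : d < q) :
    ∑ i ∈ Finset.range (d + 1), (q.choose i : ℤ) *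
        ∑ k ∈ Finset.range (d - i + 1),
          (-1 : ℤ) ^ k * ((q - i).choose k : ℤ) * (q : ℤ) ^ (d - i - k) =
      (q : ℤ) ^ d := by
  have h1 : ∑ i ∈ Finset.range (d + 1), (q.choose i : ℤ) *
        ∑ k ∈ Finset.range (d - i + 1),
          (-1 : ℤ) ^ k * ((q - i).choose k : ℤ) * (q : ℤ) ^ (d - i - k)
      = ∑ s ∈ Finset.range (d + 1), ∑ i ∈ Finset.range (s + 1),
          (-1 : ℤ) ^ (s - i) * ((q.choose i : ℤ) * ((q - i).choose (s - i) : ℤ))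
            * (q : ℤ) ^ (d - s) := by
    simp only [Finset.mul_sum]
    have step : ∀ i ∈ Finset.range (d + 1),
        (∑ k ∈ Finset.range (d - i + 1), (q.choose i : ℤ) *
          ((-1 : ℤ) ^ k * ((q - i).choose k : ℤ) * (q : ℤ) ^ (d - i - k)))
        = ∑ s ∈ Finset.Ico i (d + 1),
            (-1 : ℤ) ^ (s - i) * ((q.choose i : ℤ) * ((q - i).choose (s - i) : ℤ))
              * (q : ℤ) ^ (d - s) := by
      intro i hi
      simp only [Finset.mem_range] at hi
      rw [Finset.sum_Ico_eq_sum_range]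
      have hlen : d + 1 - i = d - i + 1 := by omega
      rw [hlen]
      refine Finset.sum_congr rfl fun k hk => ?_
      simp only [Finset.mem_range] at hk
      have e1 : i + k - i = k := by omega
      have e2 : d - (i + k) = d - i - k := by omega
      rw [e1, e2]; ring
    rw [Finset.sum_congr rfl step]
    have : ∀ i, Finset.range (i + 1) = Finset.Ico 0 (i + 1) := fun i => by
      rw [Nat.Ico_zero_eq_range]
    rw [this d]
    rw [Finset.sum_Ico_Ico_comm]
    exact Finset.sum_congr rfl fun s _ => by rw [this s]
  rw [h1]
  have h2 : ∀ s ∈ Finset.range (d + 1), ∑ i ∈ Finset.range (s + 1),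
      (-1 : ℤ) ^ (s - i) * ((q.choose i : ℤ) * ((q - i).choose (s - i) : ℤ))
        * (q : ℤ) ^ (d - s) = if s = 0 then (q : ℤ) ^ d else 0 := by
    intro s hs
    simp only [Finset.mem_range] at hs
    have hsq : s ≤ q := by omega
    have h3 : ∀ i ∈ Finset.range (s + 1),
        (-1 : ℤ) ^ (s - i) * ((q.choose i : ℤ) * ((q - i).choose (s - i) : ℤ))
          * (q : ℤ) ^ (d - s)
        = (((-1 : ℤ)) ^ s * ((q.choose s : ℤ) * (q : ℤ) ^ (d - s)))
            * ((-1 : ℤ) ^ i * (s.choose i : ℤ)) := by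
      intro i hi
      simp only [Finset.mem_range] at hi
      have his : i ≤ s := by omega
      rw [← Nat.cast_mul, ← Nat.choose_mul his, Nat.cast_mul]
      have e : (-1 : ℤ) ^ s = (-1) ^ (s - i) * (-1) ^ i := by
        rw [← pow_add]; congr 1; omega
      rw [e]
      have e2 : ((-1 : ℤ)) ^ i * (-1) ^ i = 1 := by
        rw [← pow_add, ← two_mul, pow_mul]; norm_num
      linear_combination (-((-1 : ℤ) ^ (s - i) * (q.choose s : ℤ) * (s.choose i : ℤ) * (q : ℤ) ^ (d - s))) * e2
    rw [Finset.sum_congr rfl h3, ← Finset.mul_sum, Int.alternating_sum_range_choose]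
    split_ifs with h
    · subst h; simp
    · simp
  rw [Finset.sum_congr rfl h2]
  simp

/-- For every prime power `q` and every `1 ≤ m ≤ q − 1`,
`(q−1)·∑_{i=0}^{m} C(q,i)·∑_{d=i}^{m} ∑_{k=0}^{d−i} (−1)^k·C(q−i,k)·q^{d−i−k} = q^{m+1} − 1`,
i.e. the sum equals `(q^{m+1} − 1)/(q − 1)`. -/
theorem wenger_multiplicity_identity (q m : ℕ) (hq : IsPrimePow q)
    (hm1 : 1 ≤ m) (hm2 : m ≤ q - 1) :
    ((q : ℤ) - 1) * ∑ i ∈ Finset.range (m + 1), (q.choose i : ℤ) *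
        ∑ d ∈ Finset.Icc i m, ∑ k ∈ Finset.range (d - i + 1),
          (-1 : ℤ) ^ k * ((q - i).choose k : ℤ) * (q : ℤ) ^ (d - i - k) =
      (q : ℤ) ^ (m + 1) - 1 := by
  have hq1 : 1 ≤ q := hq.one_lt.le.trans' (by omega)
  have hq2 : 2 ≤ q := hq.two_le
  have hswap : ∑ i ∈ Finset.range (m + 1), (q.choose i : ℤ) *
        ∑ d ∈ Finset.Icc i m, ∑ k ∈ Finset.range (d - i + 1),
          (-1 : ℤ) ^ k * ((q - i).choose k : ℤ) * (q : ℤ) ^ (d - i - k)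
      = ∑ d ∈ Finset.range (m + 1), ∑ i ∈ Finset.range (d + 1), (q.choose i : ℤ) *
          ∑ k ∈ Finset.range (d - i + 1),
            (-1 : ℤ) ^ k * ((q - i).choose k : ℤ) * (q : ℤ) ^ (d - i - k) := by
    simp only [Finset.mul_sum]
    have : ∀ i, Finset.Icc i m = Finset.Ico i (m + 1) := fun i => by
      rw [Finset.Ico_add_one_right_eq_Icc]
    simp only [this, ← Nat.Ico_zero_eq_range]
    rw [Finset.sum_Ico_Ico_comm]
  rw [hswap]
  have : ∀ d ∈ Finset.range (m + 1), (∑ i ∈ Finset.range (d + 1), (q.choose i : ℤ) *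
          ∑ k ∈ Finset.range (d - i + 1),
            (-1 : ℤ) ^ k * ((q - i).choose k : ℤ) * (q : ℤ) ^ (d - i - k))
        = (q : ℤ) ^ d := by
    intro d hd
    simp only [Finset.mem_range] at hd
    exact key q d (by omega)
  rw [Finset.sum_congr rfl this, mul_geom_sum]
end

section
/- Let q be a prime power and m ≥ q an integer. Then a real number λ is an eigenvalue of the adjacency matrix of the Wenger graph W_m(q) if and only if λ ∈ {q, −q} ∪ {√(i·q) : 0 ≤ i ≤ q−1} ∪ {−√(i·q) : 0 ≤ i ≤ q−1}; that is, the distinct eigenvalues of W_m(q) are exactly ±q, ±√((q−1)q), ±√((q−2)q), …, ±√(2q), ±√q, and 0. -/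
open Finset

open scoped Classical in
/-- The (real) adjacency matrix of the Wenger graph `W_m(q)`. -/
noncomputable def wengerAdjMatrix (F : Type*) [Field F] (m : ℕ) :
    Matrix ((Fin (m + 1) → F) ⊕ (Fin (m + 1) → F)) ((Fin (m + 1) → F) ⊕ (Fin (m + 1) → F)) ℝ :=
  (WengerGraph F m).adjMatrix ℝ

set_option linter.unusedSectionVars false
namespace WengerAux

variable {F : Type*} [Field F] {m : ℕ}

/-- Extension of a vector to a function on `ℕ` (zero outside range). -/
def pext (p : Fin (m + 1) → F) (k : ℕ) : F := if h : k < m + 1 then p ⟨k, h⟩ else 0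

lemma pext_val (p : Fin (m + 1) → F) (i : Fin (m + 1)) : pext p i.val = p i := by
  simp [pext, i.isLt]

/-- `g_k(p)`, defined by `g_0 = 0`, `g_{k+1} = g_k p_0 + p_{k+1}`. -/
def gAux (p : Fin (m + 1) → F) : ℕ → F
  | 0 => 0
  | k + 1 => gAux p k * p 0 + pext p (k + 1)

def gvec (p : Fin (m + 1) → F) : Fin (m + 1) → F := fun i => gAux p i.val

def vvec (s : F) : Fin (m + 1) → F := fun i => s ^ (i : ℕ)

/-- The line through `p` with first coordinate `t`. -/
def lineOf (p : Fin (m + 1) → F) (t : F) : Fin (m + 1) → F :=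
  fun i => t * p 0 ^ (i : ℕ) - gAux p i.val

lemma lineOf_eq_smul_add (p : Fin (m + 1) → F) (t : F) :
    lineOf p t = t • vvec (p 0) + (-gvec p) := by
  funext i
  simp [lineOf, vvec, gvec, sub_eq_add_neg]

lemma lineOf_adj (p : Fin (m + 1) → F) (t : F) : wengerAdj p (lineOf p t) := by
  intro i
  have h1 : (i.succ : ℕ) = (i : ℕ) + 1 := rfl
  have h2 : ((i.castSucc : Fin (m + 1)) : ℕ) = (i : ℕ) := rfl
  have h3 : pext p ((i : ℕ) + 1) = p i.succ := by
    rw [show ((i : ℕ) + 1) = (i.succ : ℕ) from rfl, pext_val]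
  simp only [lineOf, h1, h2, gAux, h3]
  ring

lemma adj_eq_lineOf {p l : Fin (m + 1) → F} (h : wengerAdj p l) : l = lineOf p (l 0) := by
  funext i
  induction i using Fin.induction with
  | zero => simp [lineOf, gAux]
  | succ i ih =>
    have hadj := h i
    have h1 : (i.succ : ℕ) = (i : ℕ) + 1 := rfl
    have h2 : ((i.castSucc : Fin (m + 1)) : ℕ) = (i : ℕ) := rfl
    have h3 : pext p ((i : ℕ) + 1) = p i.succ := by
      rw [show ((i : ℕ) + 1) = (i.succ : ℕ) from rfl, pext_val]
    have : l i.succ = l i.castSucc * p 0 - p i.succ := by linear_combination hadj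
    rw [this, ih]
    simp only [lineOf, h1, h2, gAux, h3]
    ring

/-- The point on line `l` with first coordinate `s`. -/
def pointOf (l : Fin (m + 1) → F) (s : F) : Fin (m + 1) → F :=
  Fin.cons s (fun i : Fin m => l i.castSucc * s - l i.succ)

@[simp] lemma pointOf_zero (l : Fin (m + 1) → F) (s : F) : pointOf l s 0 = s := rfl

lemma pointOf_succ (l : Fin (m + 1) → F) (s : F) (i : Fin m) :
    pointOf l s i.succ = l i.castSucc * s - l i.succ := by
  simp [pointOf]

lemma pointOf_adj (l : Fin (m + 1) → F) (s : F) : wengerAdj (pointOf l s) l := by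
  intro i
  rw [pointOf_succ, pointOf_zero]
  ring

lemma adj_eq_pointOf {p l : Fin (m + 1) → F} (h : wengerAdj p l) : p = pointOf l (p 0) := by
  funext i
  induction i using Fin.cases with
  | zero => simp
  | succ i =>
    rw [pointOf_succ]
    linear_combination (h i)

lemma gAux_pointOf (l : Fin (m + 1) → F) (s : F) :
    ∀ k (h : k < m + 1), gAux (pointOf l s) k = l 0 * s ^ k - l ⟨k, h⟩ := by
  intro k
  induction k with
  | zero => intro h; simp [gAux, show (⟨0, h⟩ : Fin (m+1)) = 0 from rfl]
  | succ k ih =>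
    intro h
    have hk : k < m + 1 := Nat.lt_of_succ_lt h
    have hkm : k < m := Nat.lt_of_succ_lt_succ h
    have h3 : pext (pointOf l s) (k + 1) = pointOf l s (⟨k, hkm⟩ : Fin m).succ := by
      rw [show ((⟨k, hkm⟩ : Fin m).succ : Fin (m+1)) = ⟨k + 1, h⟩ by ext; rfl]
      simp [pext, h]
    have h4 : ((⟨k, hkm⟩ : Fin m).castSucc : Fin (m + 1)) = ⟨k, hk⟩ := by ext; rfl
    have h5 : ((⟨k, hkm⟩ : Fin m).succ : Fin (m + 1)) = ⟨k + 1, h⟩ := by ext; rfl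
    rw [gAux, h3, pointOf_succ, ih hk, pointOf_zero, h4, h5]
    ring

lemma gvec_pointOf (l : Fin (m + 1) → F) (s : F) :
    gvec (pointOf l s) = l 0 • vvec s - l := by
  funext i
  have := gAux_pointOf l s i.val i.isLt
  simpa [gvec, vvec, Fin.eta] using this


section Char
open Matrix
variable [Fintype F]

lemma lineOf_zero_coord (p : Fin (m + 1) → F) (t : F) : lineOf p t 0 = t := by
  simp [lineOf, gAux]

open scoped Classical in
noncomputable def Nc (F : Type*) [Field F] [Fintype F] (m : ℕ) :
    Matrix (Fin (m + 1) → F) (Fin (m + 1) → F) ℂ :=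
  fun p l => if wengerAdj p l then 1 else 0

lemma mulVec_Nc (f : (Fin (m + 1) → F) → ℂ) (p : Fin (m + 1) → F) :
    (Nc F m).mulVec f p = ∑ t : F, f (lineOf p t) := by
  classical
  have himg : univ.filter (fun l => wengerAdj p l) = univ.image (lineOf p) := by
    ext l
    simp only [mem_filter, mem_univ, true_and, mem_image]
    constructor
    · intro h; exact ⟨l 0, (adj_eq_lineOf h).symm⟩
    · rintro ⟨t, rfl⟩; exact lineOf_adj p t
  have hinj : ∀ t ∈ (univ : Finset F), ∀ t' ∈ univ, lineOf p t = lineOf p t' → t = t' := by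
    intro t _ t' _ h
    have := congrFun h 0
    rwa [lineOf_zero_coord, lineOf_zero_coord] at this
  simp only [Matrix.mulVec, dotProduct, Nc, ite_mul, one_mul, zero_mul]
  rw [← Finset.sum_filter, himg, Finset.sum_image hinj]

lemma mulVec_NcT (f : (Fin (m + 1) → F) → ℂ) (l : Fin (m + 1) → F) :
    (Nc F m)ᵀ.mulVec f l = ∑ s : F, f (pointOf l s) := by
  classical
  have himg : univ.filter (fun p => wengerAdj p l) = univ.image (pointOf l) := by
    ext p
    simp only [mem_filter, mem_univ, true_and, mem_image]
    constructor
    · intro h; exact ⟨p 0, (adj_eq_pointOf h).symm⟩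
    · rintro ⟨s, rfl⟩; exact pointOf_adj l s
  have hinj : ∀ s ∈ (univ : Finset F), ∀ s' ∈ univ, pointOf l s = pointOf l s' → s = s' := by
    intro s _ s' _ h
    have := congrFun h 0
    rwa [pointOf_zero, pointOf_zero] at this
  simp only [Matrix.mulVec, dotProduct, Matrix.transpose_apply, Nc, ite_mul, one_mul, zero_mul]
  rw [← Finset.sum_filter, himg, Finset.sum_image hinj]

/-- The `F →+ F^{m+1}` homomorphism `t ↦ t • (1, s, s², …)`. -/
def smulHom (m : ℕ) (s : F) : F →+ (Fin (m + 1) → F) :=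
  AddMonoidHom.mk' (fun t => t • vvec s) (fun a b => add_smul a b _)

noncomputable def lineChar (χ : AddChar (Fin (m + 1) → F) ℂ) (s : F) : AddChar F ℂ :=
  χ.compAddMonoidHom (smulHom m s)

lemma lineChar_apply (χ : AddChar (Fin (m + 1) → F) ℂ) (s t : F) :
    lineChar χ s t = χ (t • vvec s) := rfl

open scoped Classical in
noncomputable def Zc (χ : AddChar (Fin (m + 1) → F) ℂ) : ℕ :=
  (univ.filter fun s : F => lineChar χ s = 0).card

open scoped Classical in
noncomputable def Fc (χ : AddChar (Fin (m + 1) → F) ℂ) : (Fin (m + 1) → F) → ℂ :=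
  fun p => if lineChar χ (p 0) = 0 then χ (-gvec p) else 0

lemma Zc_le (χ : AddChar (Fin (m + 1) → F) ℂ) : Zc χ ≤ Fintype.card F := by
  classical
  exact le_trans (Finset.card_filter_le _ _) (le_of_eq (Finset.card_univ))

lemma sum_line (χ : AddChar (Fin (m + 1) → F) ℂ) (p : Fin (m + 1) → F) :
    ∑ t : F, χ (lineOf p t) = (Fintype.card F : ℂ) * Fc χ p := by
  classical
  have h : ∀ t : F, χ (lineOf p t) = lineChar χ (p 0) t * χ (-gvec p) := fun t => by
    rw [lineOf_eq_smul_add, AddChar.map_add_eq_mul]; rfl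
  rw [Finset.sum_congr rfl (fun t _ => h t), ← Finset.sum_mul, AddChar.sum_eq_ite]
  unfold Fc
  split_ifs <;> simp

lemma Fc_pointOf (χ : AddChar (Fin (m + 1) → F) ℂ) (l : Fin (m + 1) → F) (s : F) :
    Fc χ (pointOf l s) = if lineChar χ s = 0 then χ l else 0 := by
  classical
  unfold Fc
  rw [pointOf_zero]
  split_ifs with h
  · rw [gvec_pointOf, neg_sub, sub_eq_add_neg, ← neg_smul, AddChar.map_add_eq_mul,
      show χ ((-(l 0)) • vvec s) = lineChar χ s (-(l 0)) from rfl, h]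
    simp
  · rfl

lemma sum_point (χ : AddChar (Fin (m + 1) → F) ℂ) (l : Fin (m + 1) → F) :
    ∑ s : F, Fc χ (pointOf l s) = (Zc χ : ℂ) * χ l := by
  classical
  simp only [Fc_pointOf]
  rw [← Finset.sum_filter, Finset.sum_const, Zc, nsmul_eq_mul]

lemma T_char (χ : AddChar (Fin (m + 1) → F) ℂ) :
    ((Nc F m)ᵀ * Nc F m).mulVec ⇑χ = ((Fintype.card F * Zc χ : ℕ) : ℂ) • ⇑χ := by
  rw [← Matrix.mulVec_mulVec]
  have h1 : (Nc F m).mulVec ⇑χ = (Fintype.card F : ℂ) • Fc χ := by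
    funext p; rw [mulVec_Nc, sum_line]; rfl
  rw [h1, Matrix.mulVec_smul]
  funext l
  simp only [Pi.smul_apply, smul_eq_mul, mulVec_NcT, sum_point]
  push_cast
  ring

end Char

/- ### Part 3: bridge and spectral arguments -/
section Bridge
open Matrix Module Polynomial

variable (F : Type) [Field F] [Fintype F] (m : ℕ)

noncomputable def Ac : Matrix ((Fin (m + 1) → F) ⊕ (Fin (m + 1) → F))
    ((Fin (m + 1) → F) ⊕ (Fin (m + 1) → F)) ℂ :=
  (wengerAdjMatrix F m).map (algebraMap ℝ ℂ)

variable {F m}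

lemma wenger_adj_inl_inr (p l : Fin (m + 1) → F) :
    (WengerGraph F m).Adj (Sum.inl p) (Sum.inr l) ↔ wengerAdj p l := Iff.rfl

lemma wenger_adj_inr_inl (p l : Fin (m + 1) → F) :
    (WengerGraph F m).Adj (Sum.inr l) (Sum.inl p) ↔ wengerAdj p l := Iff.rfl

open scoped Classical in
lemma wengerAdjMatrix_inl_inr (p l : Fin (m + 1) → F) :
    wengerAdjMatrix F m (Sum.inl p) (Sum.inr l) = if wengerAdj p l then 1 else 0 := by
  rw [wengerAdjMatrix, SimpleGraph.adjMatrix_apply]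
  simp only [wenger_adj_inl_inr]

open scoped Classical in
lemma wengerAdjMatrix_inr_inl (p l : Fin (m + 1) → F) :
    wengerAdjMatrix F m (Sum.inr l) (Sum.inl p) = if wengerAdj p l then 1 else 0 := by
  rw [wengerAdjMatrix, SimpleGraph.adjMatrix_apply]
  simp only [wenger_adj_inr_inl]

lemma wengerAdjMatrix_inl_inl (p p' : Fin (m + 1) → F) :
    wengerAdjMatrix F m (Sum.inl p) (Sum.inl p') = 0 := by
  rw [wengerAdjMatrix, SimpleGraph.adjMatrix_apply,
    if_neg (show ¬ (WengerGraph F m).Adj (Sum.inl p) (Sum.inl p') from fun h => h)]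

lemma wengerAdjMatrix_inr_inr (l l' : Fin (m + 1) → F) :
    wengerAdjMatrix F m (Sum.inr l) (Sum.inr l') = 0 := by
  rw [wengerAdjMatrix, SimpleGraph.adjMatrix_apply,
    if_neg (show ¬ (WengerGraph F m).Adj (Sum.inr l) (Sum.inr l') from fun h => h)]

lemma Ac_inl_inr (p l : Fin (m + 1) → F) : Ac F m (Sum.inl p) (Sum.inr l) = Nc F m p l := by
  classical
  rw [Ac, Matrix.map_apply, wengerAdjMatrix_inl_inr, Nc, apply_ite (algebraMap ℝ ℂ),
    _root_.map_one, _root_.map_zero]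

lemma Ac_inr_inl (p l : Fin (m + 1) → F) : Ac F m (Sum.inr l) (Sum.inl p) = Nc F m p l := by
  classical
  rw [Ac, Matrix.map_apply, wengerAdjMatrix_inr_inl, Nc, apply_ite (algebraMap ℝ ℂ),
    _root_.map_one, _root_.map_zero]

lemma Ac_inl_inl (p p' : Fin (m + 1) → F) : Ac F m (Sum.inl p) (Sum.inl p') = 0 := by
  rw [Ac, Matrix.map_apply, wengerAdjMatrix_inl_inl, map_zero]

lemma Ac_inr_inr (l l' : Fin (m + 1) → F) : Ac F m (Sum.inr l) (Sum.inr l') = 0 := by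
  rw [Ac, Matrix.map_apply, wengerAdjMatrix_inr_inr, map_zero]

lemma mulVec_Ac_inl (w : ((Fin (m + 1) → F) ⊕ (Fin (m + 1) → F)) → ℂ) (p : Fin (m + 1) → F) :
    (Ac F m).mulVec w (Sum.inl p) = (Nc F m).mulVec (w ∘ Sum.inr) p := by
  simp only [Matrix.mulVec, dotProduct, Fintype.sum_sum_type, Ac_inl_inl, Ac_inl_inr,
    zero_mul, Finset.sum_const_zero, zero_add, Function.comp]

lemma mulVec_Ac_inr (w : ((Fin (m + 1) → F) ⊕ (Fin (m + 1) → F)) → ℂ) (l : Fin (m + 1) → F) :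
    (Ac F m).mulVec w (Sum.inr l) = (Nc F m)ᵀ.mulVec (w ∘ Sum.inl) l := by
  simp only [Matrix.mulVec, dotProduct, Fintype.sum_sum_type, Ac_inr_inl, Ac_inr_inr,
    Matrix.transpose_apply, zero_mul, Finset.sum_const_zero, add_zero, Function.comp]

/-- Bridge: real eigenvalues of the real adjacency matrix correspond to complex eigenvectors. -/
lemma hasEigenvalue_iff_complex (lam : ℝ) :
    Module.End.HasEigenvalue ((wengerAdjMatrix F m).mulVecLin) lam ↔
      ∃ w : ((Fin (m + 1) → F) ⊕ (Fin (m + 1) → F)) → ℂ,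
        w ≠ 0 ∧ (Ac F m).mulVec w = (lam : ℂ) • w := by
  classical
  have hreal : Module.End.HasEigenvalue ((wengerAdjMatrix F m).mulVecLin) lam ↔
      ∃ v : ((Fin (m + 1) → F) ⊕ (Fin (m + 1) → F)) → ℝ,
        v ≠ 0 ∧ (wengerAdjMatrix F m).mulVec v = lam • v := by
    rw [Module.End.hasEigenvalue_iff, Submodule.ne_bot_iff]
    constructor
    · rintro ⟨v, hv, hv0⟩
      exact ⟨v, hv0, Module.End.mem_eigenspace_iff.mp hv⟩
    · rintro ⟨v, hv0, hv⟩
      exact ⟨v, Module.End.mem_eigenspace_iff.mpr hv, hv0⟩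
  -- reduce both sides to determinants
  have hdetR : (∃ v : ((Fin (m + 1) → F) ⊕ (Fin (m + 1) → F)) → ℝ,
        v ≠ 0 ∧ (wengerAdjMatrix F m).mulVec v = lam • v) ↔
      (wengerAdjMatrix F m - lam • 1).det = 0 := by
    rw [← Matrix.exists_mulVec_eq_zero_iff]
    apply exists_congr; intro v
    rw [Matrix.sub_mulVec, Matrix.smul_mulVec, Matrix.one_mulVec, sub_eq_zero]
  have hdetC : (∃ w : ((Fin (m + 1) → F) ⊕ (Fin (m + 1) → F)) → ℂ,
        w ≠ 0 ∧ (Ac F m).mulVec w = (lam : ℂ) • w) ↔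
      (Ac F m - (lam : ℂ) • 1).det = 0 := by
    rw [← Matrix.exists_mulVec_eq_zero_iff]
    apply exists_congr; intro w
    rw [Matrix.sub_mulVec, Matrix.smul_mulVec, Matrix.one_mulVec, sub_eq_zero]
  have hmap : (wengerAdjMatrix F m - lam • 1).map (algebraMap ℝ ℂ) =
      Ac F m - (lam : ℂ) • 1 := by
    ext i j
    simp only [Matrix.map_apply, Matrix.sub_apply, Matrix.smul_apply, Matrix.one_apply,
      smul_eq_mul, map_sub, _root_.map_mul, Ac]
    rw [apply_ite (algebraMap ℝ ℂ), _root_.map_one, _root_.map_zero]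
    norm_num
  have hdm := RingHom.map_det (algebraMap ℝ ℂ) (wengerAdjMatrix F m - lam • 1)
  rw [RingHom.mapMatrix_apply, hmap] at hdm
  have hdm' : (((wengerAdjMatrix F m - lam • 1).det : ℝ) : ℂ) =
      (Ac F m - (lam : ℂ) • 1).det := by rw [← hdm]; rfl
  rw [hreal, hdetR, hdetC, ← hdm', Complex.ofReal_eq_zero]

/-- A nonzero additive character, as a function, is nonzero. -/
lemma char_fun_ne_zero {A : Type*} [AddCommGroup A] (χ : AddChar A ℂ) : ⇑χ ≠ 0 := by
  intro h
  have := congrFun h 0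
  simp at this

lemma char_apply_ne_zero {A : Type*} [AddCommGroup A] (χ : AddChar A ℂ) (a : A) : χ a ≠ 0 := by
  have h : χ a * χ (-a) = 1 := by
    rw [← AddChar.map_add_eq_mul, add_neg_cancel, AddChar.map_zero_eq_one]
  exact left_ne_zero_of_mul_eq_one h

/-- Forward: a complex eigenvalue `lam` of the Wenger adjacency matrix satisfies
`lam² = k·q` for some `0 ≤ k ≤ q`. -/
lemma forward_spec (lam : ℝ)
    (h : ∃ w : ((Fin (m + 1) → F) ⊕ (Fin (m + 1) → F)) → ℂ,
      w ≠ 0 ∧ (Ac F m).mulVec w = (lam : ℂ) • w) :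
    ∃ k : ℕ, k ≤ Fintype.card F ∧ lam ^ 2 = (k : ℝ) * (Fintype.card F : ℝ) := by
  classical
  obtain ⟨w, hw0, heig⟩ := h
  set x := w ∘ Sum.inl with hxdef
  set y := w ∘ Sum.inr with hydef
  have hx : (Nc F m).mulVec y = (lam : ℂ) • x := by
    funext p
    have := congrFun heig (Sum.inl p)
    rw [mulVec_Ac_inl] at this
    exact this
  have hy : (Nc F m)ᵀ.mulVec x = (lam : ℂ) • y := by
    funext l
    have := congrFun heig (Sum.inr l)
    rw [mulVec_Ac_inr] at this
    exact this
  by_cases hy0 : y = 0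
  · -- then lam = 0
    have hx0 : x ≠ 0 := by
      intro hx0
      apply hw0
      funext v
      cases v with
      | inl p => exact congrFun hx0 p
      | inr l => exact congrFun hy0 l
    have : (lam : ℂ) • x = 0 := by rw [← hx, hy0, Matrix.mulVec_zero]
    rcases smul_eq_zero.mp this with h0 | h0
    · refine ⟨0, Nat.zero_le _, ?_⟩
      have : lam = 0 := by exact_mod_cast h0
      simp [this]
    · exact absurd h0 hx0
  · -- y is an eigenvector of NᵀN with eigenvalue lam²
    have hT : ((Nc F m)ᵀ * Nc F m).mulVecLin y = ((lam : ℂ) ^ 2) • y := by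
      show ((Nc F m)ᵀ * Nc F m).mulVec y = ((lam : ℂ) ^ 2) • y
      rw [← Matrix.mulVec_mulVec, hx, Matrix.mulVec_smul, hy, smul_smul, sq]
    set q := Fintype.card F with hqdef
    set T : Module.End ℂ ((Fin (m + 1) → F) → ℂ) := ((Nc F m)ᵀ * Nc F m).mulVecLin with hTdef
    set P : ℂ[X] := ∏ k ∈ Finset.range (q + 1), (X - C ((q * k : ℕ) : ℂ)) with hPdef
    -- P annihilates T because it kills every character, and characters span
    have hchar : ∀ χ : AddChar (Fin (m + 1) → F) ℂ, (aeval T P) ⇑χ = 0 := by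
      intro χ
      have hev : T.HasEigenvector ((q * Zc χ : ℕ) : ℂ) ⇑χ := by
        constructor
        · rw [Module.End.mem_eigenspace_iff]
          show ((Nc F m)ᵀ * Nc F m).mulVec ⇑χ = _
          rw [T_char]
        · exact char_fun_ne_zero χ
      rw [Module.End.aeval_apply_of_hasEigenvector hev]
      have : P.eval ((q * Zc χ : ℕ) : ℂ) = 0 := by
        rw [hPdef, Polynomial.eval_prod]
        refine Finset.prod_eq_zero (Finset.mem_range.mpr (Nat.lt_succ_of_le (Zc_le χ))) ?_
        simp
      rw [this, zero_smul]
    have hann : aeval T P = 0 := by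
      have hspan : Submodule.span ℂ (Set.range ((⇑) : AddChar (Fin (m + 1) → F) ℂ →
          ((Fin (m + 1) → F) → ℂ))) = ⊤ := by
        have := (AddChar.complexBasis (Fin (m + 1) → F)).span_eq
        rwa [AddChar.coe_complexBasis] at this
      apply LinearMap.ext_on hspan
      rintro f ⟨χ, rfl⟩
      simpa using hchar χ
    have h0 : P.eval ((lam : ℂ) ^ 2) • y = 0 := by
      have hev : T.HasEigenvector ((lam : ℂ) ^ 2) y := ⟨Module.End.mem_eigenspace_iff.mpr hT, hy0⟩
      rw [← Module.End.aeval_apply_of_hasEigenvector hev, hann]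
      rfl
    have hPe : P.eval ((lam : ℂ) ^ 2) = 0 := by
      rcases smul_eq_zero.mp h0 with h | h
      · exact h
      · exact absurd h hy0
    rw [hPdef, Polynomial.eval_prod, Finset.prod_eq_zero_iff] at hPe
    obtain ⟨k, hk, hk0⟩ := hPe
    simp only [Polynomial.eval_sub, Polynomial.eval_X, Polynomial.eval_C, sub_eq_zero] at hk0
    refine ⟨k, Nat.lt_succ_iff.mp (Finset.mem_range.mp hk), ?_⟩
    have : ((lam ^ 2 : ℝ) : ℂ) = (((k * q : ℕ) : ℝ) : ℂ) := by
      push_cast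
      push_cast at hk0
      rw [hk0]; ring
    have := Complex.ofReal_inj.mp this
    rw [this]; push_cast; ring

/-- Reverse: from a character `χ` with `lam² = q · Zc χ`, build a complex eigenvector. -/
lemma reverse_spec (χ : AddChar (Fin (m + 1) → F) ℂ) (lam : ℝ)
    (h : lam ^ 2 = ((Fintype.card F * Zc χ : ℕ) : ℝ)) :
    ∃ w : ((Fin (m + 1) → F) ⊕ (Fin (m + 1) → F)) → ℂ,
      w ≠ 0 ∧ (Ac F m).mulVec w = (lam : ℂ) • w := by
  classical
  have hC : ((lam : ℂ)) ^ 2 = ((Fintype.card F * Zc χ : ℕ) : ℂ) := by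
    exact_mod_cast congrArg (fun r : ℝ => (r : ℂ)) h
  by_cases hlam : lam = 0
  · -- kernel eigenvector
    have hZ : Zc χ = 0 := by
      have : ((Fintype.card F * Zc χ : ℕ) : ℝ) = 0 := by rw [← h, hlam]; norm_num
      have : Fintype.card F * Zc χ = 0 := by exact_mod_cast this
      rcases Nat.mul_eq_zero.mp this with h' | h'
      · exact absurd h' Fintype.card_ne_zero
      · exact h'
    have hnoroot : ∀ s : F, lineChar χ s ≠ 0 := by
      have := Finset.card_eq_zero.mp hZ
      intro s hs
      have : s ∈ (Finset.univ.filter fun s : F => lineChar χ s = 0) :=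
        Finset.mem_filter.mpr ⟨Finset.mem_univ s, hs⟩
      rw [Finset.card_eq_zero.mp hZ] at this
      exact absurd this (Finset.notMem_empty s)
    refine ⟨Sum.elim 0 ⇑χ, ?_, ?_⟩
    · intro h0
      have := congrFun h0 (Sum.inr 0)
      simp at this
    · funext v
      cases v with
      | inl p =>
        rw [mulVec_Ac_inl, Sum.elim_comp_inr, mulVec_Nc, sum_line]
        have : Fc χ p = 0 := by
          rw [Fc, if_neg (hnoroot (p 0))]
        rw [this, hlam]
        simp
      | inr l =>
        rw [mulVec_Ac_inr, Sum.elim_comp_inl, Matrix.mulVec_zero, hlam]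
        simp
  · -- genuine eigenvector
    refine ⟨Sum.elim ((Fintype.card F : ℂ) • Fc χ) ((lam : ℂ) • ⇑χ), ?_, ?_⟩
    · intro h0
      have := congrFun h0 (Sum.inr 0)
      simp only [Sum.elim_inr, Pi.smul_apply, Pi.zero_apply, smul_eq_mul] at this
      rw [AddChar.map_zero_eq_one, mul_one] at this
      exact hlam (by exact_mod_cast this)
    · funext v
      cases v with
      | inl p =>
        rw [mulVec_Ac_inl, Sum.elim_comp_inr, Matrix.mulVec_smul]
        have : (Nc F m).mulVec ⇑χ = (Fintype.card F : ℂ) • Fc χ := by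
          funext p'; rw [mulVec_Nc, sum_line]; rfl
        rw [this]
        simp [smul_smul, mul_comm]
      | inr l =>
        rw [mulVec_Ac_inr, Sum.elim_comp_inl, Matrix.mulVec_smul]
        have hpt : (Nc F m)ᵀ.mulVec (Fc χ) = (Zc χ : ℂ) • ⇑χ := by
          funext l'; rw [mulVec_NcT, sum_point]; rfl
        rw [hpt]
        simp only [Pi.smul_apply, Sum.elim_inr, smul_eq_mul]
        push_cast at hC
        linear_combination (-(χ l)) * hC
      
/-- Realize each `k ≤ min(q, m)` as `Zc χ` for some character. -/
lemma exists_Zc (k : ℕ) (hk : k ≤ Fintype.card F) (hkm : k < m + 1) :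
    ∃ χ : AddChar (Fin (m + 1) → F) ℂ, Zc χ = k := by
  classical
  -- a character of F nontrivial at 1
  obtain ⟨ψ, hψ⟩ := (AddChar.exists_apply_ne_zero (a := (1 : F))).mpr one_ne_zero
  -- an embedding of Fin k into F
  obtain ⟨e⟩ := Function.Embedding.nonempty_of_card_le
    (by rw [Fintype.card_fin]; exact hk : Fintype.card (Fin k) ≤ Fintype.card F)
  set P : Polynomial F := ∏ j : Fin k, (Polynomial.X - Polynomial.C (e j)) with hPdef
  have hPdeg : P.natDegree = k := by
    rw [hPdef, Polynomial.natDegree_prod]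
    · simp [Polynomial.natDegree_X_sub_C]
    · intro j _; exact Polynomial.X_sub_C_ne_zero (e j)
  set b : Fin (m + 1) → F := fun i => P.coeff i with hbdef
  set dotHom : (Fin (m + 1) → F) →+ F :=
    AddMonoidHom.mk' (fun x => ∑ i, b i * x i)
      (fun u v => by simp [mul_add, Finset.sum_add_distrib]) with hdot
  refine ⟨ψ.compAddMonoidHom dotHom, ?_⟩
  have hval : ∀ s t : F, lineChar (ψ.compAddMonoidHom dotHom) s t = ψ (t * P.eval s) := by
    intro s t
    rw [lineChar_apply, AddChar.compAddMonoidHom_apply]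
    congr 1
    show ∑ i, b i * (t • vvec s) i = t * P.eval s
    have : ∀ i : Fin (m + 1), b i * (t • vvec s) i = t * (P.coeff i * s ^ (i : ℕ)) := by
      intro i
      show b i * (t * vvec s i) = _
      rw [hbdef, vvec]
      ring
    rw [Finset.sum_congr rfl (fun i _ => this i), ← Finset.mul_sum]
    congr 1
    rw [Fin.sum_univ_eq_sum_range (fun i => P.coeff i * s ^ i),
      ← Polynomial.eval_eq_sum_range' (lt_of_le_of_lt (le_of_eq hPdeg) hkm)]
  have hiff : ∀ s : F, lineChar (ψ.compAddMonoidHom dotHom) s = 0 ↔ P.eval s = 0 := by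
    intro s
    constructor
    · intro h0
      by_contra hne
      have := congrFun (congrArg (⇑) h0) ((P.eval s)⁻¹)
      rw [hval] at this
      rw [inv_mul_cancel₀ hne] at this
      rw [AddChar.zero_apply] at this
      exact hψ this
    · intro h0
      ext t
      rw [hval, h0, mul_zero, AddChar.map_zero_eq_one, AddChar.zero_apply]
  have hroots : (Finset.univ.filter fun s : F => P.eval s = 0) = Finset.univ.image e := by
    ext s
    simp only [Finset.mem_filter, Finset.mem_univ, true_and, Finset.mem_image]
    rw [hPdef, Polynomial.eval_prod]
    rw [Finset.prod_eq_zero_iff]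
    constructor
    · rintro ⟨j, _, hj⟩
      simp only [Polynomial.eval_sub, Polynomial.eval_X, Polynomial.eval_C, sub_eq_zero] at hj
      exact ⟨j, hj.symm⟩
    · rintro ⟨j, rfl⟩
      refine ⟨j, Finset.mem_univ j, ?_⟩
      simp
  rw [Zc]
  have : (Finset.univ.filter fun s : F => lineChar (ψ.compAddMonoidHom dotHom) s = 0) =
      (Finset.univ.filter fun s : F => P.eval s = 0) := by
    apply Finset.filter_congr
    intro s _
    simp only [hiff]
  rw [this, hroots, Finset.card_image_of_injective _ e.injective]
  simp

end Bridge

end WengerAux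

/-- For a prime power `q` and `m ≥ q`, the distinct eigenvalues of the
adjacency matrix of `W_m(q)` are exactly `±q` and `±√(i·q)` for `0 ≤ i ≤ q − 1`. -/
theorem wenger_eigenvalues_large_m (q m : ℕ) (F : Type) [Field F] [Fintype F]
    (hq : Fintype.card F = q) (hm : q ≤ m) (lam : ℝ) :
    Module.End.HasEigenvalue ((wengerAdjMatrix F m).mulVecLin) lam ↔
      (lam = q ∨ lam = -q ∨
        ∃ i : ℕ, i ≤ q - 1 ∧ (lam = Real.sqrt (i * q) ∨ lam = -Real.sqrt (i * q))) := by
  have hq1 : 1 ≤ q := hq ▸ Fintype.card_pos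
  rw [WengerAux.hasEigenvalue_iff_complex]
  constructor
  · intro h
    obtain ⟨k, hk, hlam⟩ := WengerAux.forward_spec lam h
    rw [hq] at hk hlam
    by_cases hkq : k = q
    · rw [hkq] at hlam
      have : (lam - q) * (lam + q) = 0 := by nlinarith [hlam]
      rcases mul_eq_zero.mp this with h' | h'
      · exact Or.inl (by linarith)
      · exact Or.inr (Or.inl (by linarith))
    · refine Or.inr (Or.inr ⟨k, by omega, ?_⟩)
      have habs : Real.sqrt (k * q) = |lam| := by
        rw [show ((k : ℝ) * q) = lam ^ 2 from hlam.symm, Real.sqrt_sq_eq_abs]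
      rcases le_or_gt 0 lam with h' | h'
      · exact Or.inl (by rw [habs, abs_of_nonneg h'])
      · exact Or.inr (by rw [habs, abs_of_neg h']; ring)
  · intro h
    have hcard : Fintype.card F = q := hq
    rcases h with h | h | ⟨i, hi, h⟩
    · obtain ⟨χ, hχ⟩ := WengerAux.exists_Zc (F := F) (m := m) q (le_of_eq hcard.symm)
        (by omega)
      apply WengerAux.reverse_spec χ
      rw [hχ, hcard, h]
      push_cast
      ring
    · obtain ⟨χ, hχ⟩ := WengerAux.exists_Zc (F := F) (m := m) q (le_of_eq hcard.symm)
        (by omega)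
      apply WengerAux.reverse_spec χ
      rw [hχ, hcard, h]
      push_cast
      ring
    · obtain ⟨χ, hχ⟩ := WengerAux.exists_Zc (F := F) (m := m) i (by omega) (by omega)
      apply WengerAux.reverse_spec χ
      rw [hχ, hcard]
      have hiq : (0 : ℝ) ≤ (i : ℝ) * q := by positivity
      rcases h with h | h
      · rw [h, Real.sq_sqrt hiq]; push_cast; ring
      · rw [h]
        rw [neg_pow, Real.sq_sqrt hiq]
        push_cast; ring
end

section
/- Let q be a prime power and m ≥ 1. Then the graph H'_{m+2}(q) is isomorphic to the Wenger graph W_m(q), via the map sending each point (p_2, p_3, …, p_{m+2}) of H'_{m+2}(q) to the line [p_2, p_3, …, p_{m+2}] of W_m(q), and each line [l_1, l_3, l_4, …, l_{m+2}] of H'_{m+2}(q) to the point (−l_1, −l_3, −l_4, …, −l_{m+2}) of W_m(q). -/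
open Finset

/-- Adjacency relation of the graph `H'_{m+2}(q)`: the point `(p_2, …, p_{m+2})` is
adjacent to the line `[l_1, l_3, …, l_{m+2}]` iff `l_k − p_k = l_1 * p_{k−1}` for
`k = 3, …, m+2` (here both are encoded as vectors indexed by `Fin (m+1)`, the point via
`j ↦ p_{j+2}` and the line via `0 ↦ l_1`, `j ↦ l_{j+2}` for `j ≥ 1`). -/
def hPrimeAdj {F : Type*} [Field F] {m : ℕ} (p l : Fin (m + 1) → F) : Prop :=
  ∀ i : Fin m, l i.succ - p i.succ = l 0 * p i.castSucc

/-- The graph `H'_{m+2}(q)`, with points as `inl` and lines as `inr`. -/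
def HPrimeGraph (F : Type*) [Field F] (m : ℕ) :
    SimpleGraph ((Fin (m + 1) → F) ⊕ (Fin (m + 1) → F)) where
  Adj x y :=
    match x, y with
    | Sum.inl p, Sum.inr l => hPrimeAdj p l
    | Sum.inr l, Sum.inl p => hPrimeAdj p l
    | _, _ => False
  symm := ⟨by rintro (p | l) (p' | l') h <;> exact h⟩
  loopless := ⟨by rintro (p | l) h <;> exact h⟩

/-- The map sending each point `(p_2, …, p_{m+2})` of `H'_{m+2}(q)` to
the line `[p_2, …, p_{m+2}]` of `W_m(q)` and each line `[l_1, l_3, …, l_{m+2}]` of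
`H'_{m+2}(q)` to the point `(−l_1, −l_3, …, −l_{m+2})` of `W_m(q)` is a graph
isomorphism from `H'_{m+2}(q)` to `W_m(q)`. -/
theorem hPrime_iso_wenger (q m : ℕ) (hm : 1 ≤ m) (F : Type) [Field F] [Fintype F]
    (hq : Fintype.card F = q) :
    ∃ e : HPrimeGraph F m ≃g WengerGraph F m,
      (∀ p : Fin (m + 1) → F, e (Sum.inl p) = Sum.inr p) ∧
      (∀ l : Fin (m + 1) → F, e (Sum.inr l) = Sum.inl (fun j => -(l j))) := by
  refine ⟨⟨⟨fun x => match x with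
    | Sum.inl p => Sum.inr p
    | Sum.inr l => Sum.inl (fun j => -(l j)),
    fun x => match x with
    | Sum.inl p => Sum.inr (fun j => -(p j))
    | Sum.inr l => Sum.inl l, ?_, ?_⟩, ?_⟩, fun p => rfl, fun l => rfl⟩
  · rintro (p | l) <;> simp
  · rintro (p | l) <;> simp
  · rintro (p | l) (p' | l') <;>
      simp only [Equiv.coe_fn_mk, WengerGraph, HPrimeGraph, wengerAdj, hPrimeAdj] <;>
      constructor <;> intro h i <;> have := h i <;> linear_combination -this
end
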